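/- Let f be a Boolean function on k+1 variables that depends on all of them and let Ψ = f(H_{k0},…,H_{kk}). If θ is a partial assignment having at least 3 pairwise independent transversals, then every partial assignment θ' with Ψ[θ'] = Ψ[θ] has exactly the same set of transversals as θ. -/

import Mathlib

/-! ### Basic notions on Boolean functions -/

namespace BF

variable {V : Type}

/-- Restriction `Φ[θ]` of a Boolean function `Φ` by a partial assignment `θ`. -/
def restrict (Φ : (V → Bool) → Bool) (θ : V → Option Bool) : (V → Bool) → Bool :=
  fun a => Φ (fun v => (θ v).getD (a v))

/-- Combination `θ ∪ μ` of two partial assignments, where `θ` takes priority. -/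
def combine (θ μ : V → Option Bool) : V → Option Bool :=
  fun v => (θ v).elim (μ v) some

/-- The partial assignment setting the single variable `X` to `b`. -/
def single [DecidableEq V] (X : V) (b : Bool) : V → Option Bool :=
  fun v => if v = X then some b else none

/-- A term (conjunction of literals, given as a partial assignment) implies `Φ`. -/
def TermImplies (τ : V → Option Bool) (Φ : (V → Bool) → Bool) : Prop :=
  ∀ a : V → Bool, (∀ v b, τ v = some b → a v = b) → Φ a = true

/-- `τ'` is a subterm (subconjunction) of `τ`. -/
def Subterm (τ' τ : V → Option Bool) : Prop :=
  ∀ v b, τ' v = some b → τ v = some b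

/-- `τ` is a prime implicant of `Φ`: it implies `Φ`, and no proper subconjunction does. -/
def IsPrimeImplicant (τ : V → Option Bool) (Φ : (V → Bool) → Bool) : Prop :=
  TermImplies τ Φ ∧ ∀ τ', Subterm τ' τ → τ' ≠ τ → ¬ TermImplies τ' Φ

/-- The variable `X` is a unit of `Φ`: by itself (positively) a prime implicant of `Φ`. -/
def IsUnit [DecidableEq V] (X : V) (Φ : (V → Bool) → Bool) : Prop :=
  IsPrimeImplicant (single X true) Φ

/-- `Φ` depends on the variable `v`. -/
def DependsOnVar [DecidableEq V] (Φ : (V → Bool) → Bool) (v : V) : Prop :=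
  ∃ a : V → Bool, Φ (Function.update a v true) ≠ Φ (Function.update a v false)

/-- The set of units of `Φ`. -/
def unitSet [DecidableEq V] (Φ : (V → Bool) → Bool) : Set V :=
  {X | IsUnit X Φ}

/-- The degree of a variable `X` in `Φ`: the maximum over partial assignments `θ`
(not assigning `X`) of the number of units of `Φ[θ ∪ {X=1}]` that are not units of
`Φ[θ]`. -/
noncomputable def degreeOf [Fintype V] [DecidableEq V] (Φ : (V → Bool) → Bool) (X : V) : ℕ :=
  sSup { m | ∃ θ : V → Option Bool, θ X = none ∧
    m = (unitSet (restrict Φ (combine (single X true) θ)) \ unitSet (restrict Φ θ)).ncard }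

/-- `Δ(Φ)`: the maximum degree of any variable of `Φ`. -/
noncomputable def maxDegree [Fintype V] [DecidableEq V] (Φ : (V → Bool) → Bool) : ℕ :=
  Finset.univ.sup (fun X => degreeOf Φ X)

end BF

/-! ### FBDDs (free binary decision diagrams), possibly multi-output -/

/-- A node of a (multi-output) FBDD: a sink labeled by an output value, or a decision
node labeled by a variable with a 0-edge and a 1-edge (children are given as indices,
which are required to be smaller, guaranteeing acyclicity). -/
inductive BddNode (V O : Type) where
  | sink (o : O)
  | decision (x : V) (lo hi : ℕ)

/-- A (multi-output) FBDD structure: a rooted DAG with nodes `0, …, size-1`, in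
topological order (edges decrease the index).  Freeness (read-once) is the
predicate `FBDD.ReadOnce` below. -/
structure FBDD (V O : Type) where
  size : ℕ
  node : Fin size → BddNode V O
  root : Fin size
  dec : ∀ (i : Fin size) (x : V) (lo hi : ℕ),
      node i = .decision x lo hi → lo < i.1 ∧ hi < i.1

namespace FBDD

variable {V O : Type}

/-- The output computed at node `i` on the total assignment `a`. -/
def evalAt (F : FBDD V O) (a : V → Bool) (i : Fin F.size) : O :=
  match h : F.node i with
  | .sink o => o
  | .decision x lo hi =>
      have hd := F.dec i x lo hi h
      if a x then F.evalAt a ⟨hi, hd.2.trans i.isLt⟩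
      else F.evalAt a ⟨lo, hd.1.trans i.isLt⟩
termination_by i.1
decreasing_by
  · exact hd.2
  · exact hd.1

/-- The output of the FBDD on a total assignment. -/
def eval (F : FBDD V O) (a : V → Bool) : O := F.evalAt a F.root

/-- Edge relation of the underlying DAG. -/
def edge (F : FBDD V O) (i j : Fin F.size) : Prop :=
  ∃ x lo hi, F.node i = .decision x lo hi ∧ (j.1 = lo ∨ j.1 = hi)

/-- Reachability in the underlying DAG. -/
def reach (F : FBDD V O) : Fin F.size → Fin F.size → Prop :=
  Relation.ReflTransGen F.edge

/-- Node `i` tests the variable `x`. -/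
def tests (F : FBDD V O) (i : Fin F.size) (x : V) : Prop :=
  ∃ lo hi, F.node i = .decision x lo hi

/-- The FBDD is free (read-once): along every path from the root, each variable is
tested at most once. -/
def ReadOnce (F : FBDD V O) : Prop :=
  ∀ i c j x, F.reach F.root i → F.tests i x → F.edge i c → F.reach c j →
    ¬ F.tests j x

/-- A single-output FBDD computes the Boolean function `Φ`. -/
def Computes (F : FBDD V Bool) (Φ : (V → Bool) → Bool) : Prop :=
  ∀ a, F.eval a = Φ a

/-- A multi-output FBDD simultaneously computes the `m` Boolean functions `Φ`. -/
def ComputesAll {m : ℕ} (F : FBDD V (Fin m → Bool)) (Φ : Fin m → (V → Bool) → Bool) : Prop :=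
  ∀ a l, F.eval a l = Φ l a

/-- The Boolean function computed by the sub-DAG rooted at node `u`. -/
def funAt (F : FBDD V Bool) (u : Fin F.size) : (V → Bool) → Bool :=
  fun a => F.evalAt a u

/-- The FBDD follows the unit rule: at every (reachable) node `u` whose function has a
unit, the variable tested at `u` is a unit of that function. -/
def FollowsUnitRule [DecidableEq V] (F : FBDD V Bool) : Prop :=
  ∀ u : Fin F.size, F.reach F.root u → (∃ X, BF.IsUnit X (F.funAt u)) →
    ∀ x, F.tests u x → BF.IsUnit x (F.funAt u)

end FBDD

/-! ### DLDDs (decomposable logic decision diagrams) -/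

/-- A node of a DLDD: a sink, a decision node, a NOT-node, or a binary
AND/OR/XOR/EQUIV gate (children given as smaller indices). -/
inductive DlddNode (V : Type) where
  | sink (b : Bool)
  | decision (x : V) (lo hi : ℕ)
  | not (c : ℕ)
  | and (c1 c2 : ℕ)
  | or (c1 c2 : ℕ)
  | xor (c1 c2 : ℕ)
  | equiv (c1 c2 : ℕ)

/-- The children of a DLDD node. -/
def DlddNode.children {V : Type} : DlddNode V → List ℕ
  | .sink _ => []
  | .decision _ lo hi => [lo, hi]
  | .not c => [c]
  | .and c1 c2 => [c1, c2]
  | .or c1 c2 => [c1, c2]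
  | .xor c1 c2 => [c1, c2]
  | .equiv c1 c2 => [c1, c2]

/-- The children of a DLDD node, if it is a binary gate. -/
def DlddNode.gateChildren {V : Type} : DlddNode V → Option (ℕ × ℕ)
  | .and c1 c2 => some (c1, c2)
  | .or c1 c2 => some (c1, c2)
  | .xor c1 c2 => some (c1, c2)
  | .equiv c1 c2 => some (c1, c2)
  | _ => none

/-- A DLDD structure: a rooted DAG with nodes `0, …, size-1` in topological order.
Freeness and decomposability are the predicates `DLDD.ReadOnce` and
`DLDD.Decomposable` below. -/
structure DLDD (V : Type) where
  size : ℕ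
  node : Fin size → DlddNode V
  root : Fin size
  dec : ∀ (i : Fin size), ∀ c ∈ (node i).children, c < i.1

namespace DLDD

variable {V : Type}

/-- The Boolean value computed at node `i` on a total assignment `a`. -/
def evalAt (D : DLDD V) (a : V → Bool) (i : Fin D.size) : Bool :=
  match h : D.node i with
  | .sink b => b
  | .decision x lo hi =>
      have hlo : lo < i.1 := D.dec i lo (by rw [h]; simp [DlddNode.children])
      have hhi : hi < i.1 := D.dec i hi (by rw [h]; simp [DlddNode.children])
      if a x then D.evalAt a ⟨hi, hhi.trans i.isLt⟩
      else D.evalAt a ⟨lo, hlo.trans i.isLt⟩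
  | .not c =>
      have hc : c < i.1 := D.dec i c (by rw [h]; simp [DlddNode.children])
      ! D.evalAt a ⟨c, hc.trans i.isLt⟩
  | .and c1 c2 =>
      have h1 : c1 < i.1 := D.dec i c1 (by rw [h]; simp [DlddNode.children])
      have h2 : c2 < i.1 := D.dec i c2 (by rw [h]; simp [DlddNode.children])
      D.evalAt a ⟨c1, h1.trans i.isLt⟩ && D.evalAt a ⟨c2, h2.trans i.isLt⟩
  | .or c1 c2 =>
      have h1 : c1 < i.1 := D.dec i c1 (by rw [h]; simp [DlddNode.children])
      have h2 : c2 < i.1 := D.dec i c2 (by rw [h]; simp [DlddNode.children])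
      D.evalAt a ⟨c1, h1.trans i.isLt⟩ || D.evalAt a ⟨c2, h2.trans i.isLt⟩
  | .xor c1 c2 =>
      have h1 : c1 < i.1 := D.dec i c1 (by rw [h]; simp [DlddNode.children])
      have h2 : c2 < i.1 := D.dec i c2 (by rw [h]; simp [DlddNode.children])
      Bool.xor (D.evalAt a ⟨c1, h1.trans i.isLt⟩) (D.evalAt a ⟨c2, h2.trans i.isLt⟩)
  | .equiv c1 c2 =>
      have h1 : c1 < i.1 := D.dec i c1 (by rw [h]; simp [DlddNode.children])
      have h2 : c2 < i.1 := D.dec i c2 (by rw [h]; simp [DlddNode.children])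
      D.evalAt a ⟨c1, h1.trans i.isLt⟩ == D.evalAt a ⟨c2, h2.trans i.isLt⟩
termination_by i.1
decreasing_by
  · exact hhi
  · exact hlo
  · exact hc
  · exact h1
  · exact h2
  · exact h1
  · exact h2
  · exact h1
  · exact h2
  · exact h1
  · exact h2

/-- The Boolean value computed by the DLDD. -/
def eval (D : DLDD V) (a : V → Bool) : Bool := D.evalAt a D.root

/-- Edge relation of the underlying DAG. -/
def edge (D : DLDD V) (i j : Fin D.size) : Prop := j.1 ∈ (D.node i).children

/-- Reachability in the underlying DAG. -/
def reach (D : DLDD V) : Fin D.size → Fin D.size → Prop :=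
  Relation.ReflTransGen D.edge

/-- Node `i` is a decision node testing the variable `x`. -/
def tests (D : DLDD V) (i : Fin D.size) (x : V) : Prop :=
  ∃ lo hi, D.node i = .decision x lo hi

/-- Along every path from the root, each variable is tested at most once. -/
def ReadOnce (D : DLDD V) : Prop :=
  ∀ i c j x, D.reach D.root i → D.tests i x → D.edge i c → D.reach c j →
    ¬ D.tests j x

/-- The variable `x` is mentioned in the sub-DAG rooted at `i`. -/
def mentions (D : DLDD V) (i : Fin D.size) (x : V) : Prop :=
  ∃ j, D.reach i j ∧ D.tests j x

/-- Decomposability: the two children's sub-DAGs of any (reachable) binary gate node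
mention no common variable. -/
def Decomposable (D : DLDD V) : Prop :=
  ∀ (i : Fin D.size) (c1 c2 : ℕ), D.reach D.root i →
    (D.node i).gateChildren = some (c1, c2) →
    ∀ (h1 : c1 < D.size) (h2 : c2 < D.size) (x : V),
      ¬ (D.mentions ⟨c1, h1⟩ x ∧ D.mentions ⟨c2, h2⟩ x)

/-- The DLDD computes the Boolean function `Φ`. -/
def Computes (D : DLDD V) (Φ : (V → Bool) → Bool) : Prop :=
  ∀ a, D.eval a = Φ a

end DLDD

/-! ### The queries `h_{kℓ}` and their lineages `H_{kℓ}` -/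

/-- The Boolean variables `R(i)`, `S_ℓ(i,j)` (for `1 ≤ ℓ ≤ k`, encoded by `Fin k`),
and `T(j)`, for `i, j ∈ [n]`. -/
inductive HVar (n k : ℕ) where
  | R (i : Fin n)
  | S (l : Fin k) (i j : Fin n)
  | T (j : Fin n)
deriving DecidableEq

/-- The first variable of the prime implicant `P_{ℓ,i,j}`: `R(i)` if `ℓ = 0`,
otherwise `S_ℓ(i,j)`. -/
def leftVar (n k : ℕ) (l : Fin (k+1)) (i j : Fin n) : HVar n k :=
  if h : l.1 = 0 then .R i else .S ⟨l.1 - 1, by have := l.isLt; omega⟩ i j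

/-- The second variable of the prime implicant `P_{ℓ,i,j}`: `T(j)` if `ℓ = k`,
otherwise `S_{ℓ+1}(i,j)`. -/
def rightVar (n k : ℕ) (l : Fin (k+1)) (i j : Fin n) : HVar n k :=
  if h : l.1 = k then .T j else .S ⟨l.1, by have := l.isLt; omega⟩ i j

/-- The conjunction `P_{ℓ,i,j}` as a Boolean function. -/
def Pfun (n k : ℕ) (l : Fin (k+1)) (i j : Fin n) : (HVar n k → Bool) → Bool :=
  fun a => a (leftVar n k l i j) && a (rightVar n k l i j)

/-- The conjunction `P_{ℓ,i,j}` as a term (partial assignment). -/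
def Pterm (n k : ℕ) (l : Fin (k+1)) (i j : Fin n) : HVar n k → Option Bool :=
  fun v => if v = leftVar n k l i j ∨ v = rightVar n k l i j then some true else none

/-- The lineage `H_{kℓ} = ⋁_{i,j∈[n]} P_{ℓ,i,j}`. -/
def Hfun (n k : ℕ) (l : Fin (k+1)) : (HVar n k → Bool) → Bool :=
  fun a => decide (∃ i j : Fin n, Pfun n k l i j a = true)

/-- The lineage `H_k = H_{k0} ∨ H_{k1} ∨ ⋯ ∨ H_{kk}`. -/
def HkFun (n k : ℕ) : (HVar n k → Bool) → Bool :=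
  fun a => decide (∃ l : Fin (k+1), Hfun n k l a = true)

/-- The lineages `B_0 = ⋁_i R(i)`, `B_ℓ = ⋁_{i,j} S_ℓ(i,j)` for `1 ≤ ℓ ≤ k`, and
`B_{k+1} = ⋁_j T(j)`. -/
def Bfun (n k : ℕ) (l : Fin (k+2)) : (HVar n k → Bool) → Bool :=
  fun a => decide (∃ i j : Fin n,
    (if _ : l.1 = 0 then a (.R i)
     else if _ : l.1 = k + 1 then a (.T j)
     else a (.S ⟨l.1 - 1, by have := l.isLt; omega⟩ i j)) = true)

/-- A Boolean function `f` on `m` variables depends on its `l`-th variable: some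
assignment `μ` to the remaining variables restricts `f` to `X_l` or `¬X_l`. -/
def BFDependsOn {m : ℕ} (f : (Fin m → Bool) → Bool) (l : Fin m) : Prop :=
  ∃ μ : Fin m → Bool,
    (∀ b, f (Function.update μ l b) = b) ∨ (∀ b, f (Function.update μ l b) = !b)

/-- The lineage `Ψ = f(H_{k0}, …, H_{kk})`. -/
def Psi (n k : ℕ) (f : (Fin (k+1) → Bool) → Bool) : (HVar n k → Bool) → Bool :=
  fun a => f (fun l => Hfun n k l a)

/-- `(i,j)` is a transversal of the partial assignment `θ`: for every `0 ≤ ℓ ≤ k`,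
`P_{ℓ,i,j}` is a prime implicant of `H_{kℓ}[θ]`. -/
def Transversal (n k : ℕ) (θ : HVar n k → Option Bool) (p : Fin n × Fin n) : Prop :=
  ∀ l : Fin (k+1), BF.IsPrimeImplicant (Pterm n k l p.1 p.2) (BF.restrict (Hfun n k l) θ)

/-- Two pairs of indices are independent: they differ in both coordinates. -/
def IndepPairs {n : ℕ} (p q : Fin n × Fin n) : Prop := p.1 ≠ q.1 ∧ p.2 ≠ q.2

/-- `θ` has (at least) `m` pairwise independent transversals. -/
def HasIndepTransversals (n k : ℕ) (θ : HVar n k → Option Bool) (m : ℕ) : Prop :=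
  ∃ S : Finset (Fin n × Fin n), m ≤ S.card ∧ (∀ p ∈ S, Transversal n k θ p) ∧
    (S : Set (Fin n × Fin n)).Pairwise IndepPairs

/-- The maximum number of pairwise independent transversals of `θ`. -/
noncomputable def maxIndepTransversals (n k : ℕ) (θ : HVar n k → Option Bool) : ℕ :=
  sSup { m | ∃ S : Finset (Fin n × Fin n), S.card = m ∧ (∀ p ∈ S, Transversal n k θ p) ∧
    (S : Set (Fin n × Fin n)).Pairwise IndepPairs }

/-- A restriction `Φ` of `Ψ = f(H_{k0},…,H_{kk})` is transversal-free: some `θ` with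
`Ψ[θ] = Φ` has no transversals. -/
def TransversalFree (n k : ℕ) (f : (Fin (k+1) → Bool) → Bool)
    (Φ : (HVar n k → Bool) → Bool) : Prop :=
  ∃ θ : HVar n k → Option Bool, BF.restrict (Psi n k f) θ = Φ ∧
    ∀ p : Fin n × Fin n, ¬ Transversal n k θ p

/-- `Z` is an `H_k`-unit of the restriction `Φ` of `Ψ`: `Φ[Z=1]` is transversal-free
but `Φ` is not. -/
def IsHkUnit (n k : ℕ) (f : (Fin (k+1) → Bool) → Bool) (Z : HVar n k)
    (Φ : (HVar n k → Bool) → Bool) : Prop :=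
  TransversalFree n k f (BF.restrict Φ (BF.single Z true)) ∧ ¬ TransversalFree n k f Φ

/-- A restriction `Φ` of `Ψ` is transparent: the residual lineages `H_{kℓ}[θ]` are
the same for every `θ` with `Ψ[θ] = Φ`. -/
def Transparent (n k : ℕ) (f : (Fin (k+1) → Bool) → Bool)
    (Φ : (HVar n k → Bool) → Bool) : Prop :=
  ∃ φ : Fin (k+1) → ((HVar n k → Bool) → Bool),
    ∀ θ : HVar n k → Option Bool, BF.restrict (Psi n k f) θ = Φ →
      ∀ l, BF.restrict (Hfun n k l) θ = φ l

/-- The Boolean variables of the query `h_0`. -/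
inductive H0Var (n : ℕ) where
  | R (i : Fin n)
  | S (i j : Fin n)
  | T (j : Fin n)
deriving DecidableEq

/-- The lineage `H_0 = ⋁_{i,j∈[n]} R(i) ∧ S(i,j) ∧ T(j)`. -/
def H0Fun (n : ℕ) : (H0Var n → Bool) → Bool :=
  fun a => decide (∃ i j : Fin n, (a (.R i) && a (.S i j) && a (.T j)) = true)
/-! ### Auxiliary development for Statement 17 -/

namespace S17
open Classical

/-- Classical proposition-to-Bool. -/
noncomputable def pb (P : Prop) : Bool := if P then true else false

@[simp] lemma pb_iff {P : Prop} : pb P = true ↔ P := by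
  by_cases h : P <;> simp [pb, h]

lemma pb_false {P : Prop} (h : ¬ P) : pb P = false := by simp [pb, h]

lemma pb_true {P : Prop} (h : P) : pb P = true := by simp [pb, h]

variable {n k : ℕ}

/-- Value of variable `v` under partial assignment `θ` completed by `a`. -/
def val (θ : HVar n k → Option Bool) (a : HVar n k → Bool) (v : HVar n k) : Bool :=
  (θ v).getD (a v)

/-- The variable at position `q` (`0 ≤ q ≤ k+1`) of the chain of the pair `(i,j)`. -/
def cvar (n k : ℕ) (q : ℕ) (i j : Fin n) : HVar n k :=
  if h0 : q = 0 then .R i else if h : q ≤ k then .S ⟨q-1, by omega⟩ i j else .T j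

lemma cvar_zero (i j : Fin n) : cvar n k 0 i j = .R i := by simp [cvar]

lemma cvar_top (i j : Fin n) : cvar n k (k+1) i j = .T j := by
  have h1 : ¬ (k+1 = 0) := by omega
  have h2 : ¬ (k+1 ≤ k) := by omega
  simp [cvar, h1, h2]

lemma cvar_S {q : ℕ} (h1 : 1 ≤ q) (h2 : q ≤ k) (i j : Fin n) :
    cvar n k q i j = .S ⟨q-1, by omega⟩ i j := by
  have h0 : ¬ (q = 0) := by omega
  simp [cvar, h0, h2]

lemma cvar_eq_elim {q q' : ℕ} (hq : q ≤ k+1) (hq' : q' ≤ k+1) {i j i' j' : Fin n}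
    (h : cvar n k q i j = cvar n k q' i' j') :
    q = q' ∧ (q = 0 → i = i') ∧ (q = k+1 → j = j') ∧ (1 ≤ q → q ≤ k → i = i' ∧ j = j') := by
  have tri : ∀ m : ℕ, m ≤ k + 1 → m = 0 ∨ (1 ≤ m ∧ m ≤ k) ∨ m = k + 1 := by omega
  rcases tri q hq with h1 | ⟨h1, h1'⟩ | h1 <;> rcases tri q' hq' with h2 | ⟨h2, h2'⟩ | h2 <;>
    subst_vars <;>
    simp only [cvar_zero, cvar_top, cvar_S, HVar.S.injEq, HVar.R.injEq, HVar.T.injEq,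
      Fin.mk.injEq, *] at h <;>
  first
  | (exfalso; exact HVar.noConfusion h)
  | simp at h
  | (obtain ⟨hqq, hii, hjj⟩ := h
     exact ⟨by omega, fun hx => absurd hx (by omega), fun hx => absurd hx (by omega),
       fun _ _ => ⟨hii, hjj⟩⟩)
  | exact ⟨rfl, fun _ => h, fun hx => absurd hx (by omega), fun hx _ => absurd hx (by omega)⟩
  | exact ⟨rfl, fun hx => absurd hx (by omega), fun _ => h, fun _ hx => absurd hx (by omega)⟩

lemma leftVar_eq (l : Fin (k+1)) (i j : Fin n) :
    leftVar n k l i j = cvar n k l.1 i j := by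
  unfold leftVar cvar
  by_cases h : l.1 = 0
  · simp [h]
  · have hle : l.1 ≤ k := by omega
    simp [h, hle]

lemma rightVar_eq (l : Fin (k+1)) (i j : Fin n) :
    rightVar n k l i j = cvar n k (l.1+1) i j := by
  unfold rightVar cvar
  by_cases h : l.1 = k
  · have h1 : ¬ (l.1 + 1 = 0) := by omega
    have h2 : ¬ (l.1 + 1 ≤ k) := by omega
    simp [h, h1, h2]
  · have hle : l.1 + 1 ≤ k := by omega
    have h1 : ¬ (l.1 + 1 = 0) := by omega
    simp [h, h1, hle]

/-- `EVP l θ a` : the residual lineage `H_{kl}[θ]` fires on the probe `a`. -/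
def EVP (l : Fin (k+1)) (θ : HVar n k → Option Bool) (a : HVar n k → Bool) : Prop :=
  ∃ i j : Fin n, val θ a (cvar n k l.1 i j) = true ∧ val θ a (cvar n k (l.1+1) i j) = true

/-- The restricted lineage as a Bool-valued function. -/
def evB (l : Fin (k+1)) (θ : HVar n k → Option Bool) (a : HVar n k → Bool) : Bool :=
  BF.restrict (Hfun n k l) θ a

lemma evB_iff (l : Fin (k+1)) (θ : HVar n k → Option Bool) (a : HVar n k → Bool) :
    evB l θ a = true ↔ EVP l θ a := by
  unfold evB BF.restrict Hfun Pfun EVP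
  simp only [decide_eq_true_eq, Bool.and_eq_true, leftVar_eq, rightVar_eq]
  rfl

lemma val_true_iff (θ : HVar n k → Option Bool) (a : HVar n k → Bool) (v : HVar n k) :
    val θ a v = true ↔ θ v = some true ∨ (θ v = none ∧ a v = true) := by
  unfold val; cases h : θ v with
  | none => simp
  | some b => cases b <;> simp

lemma val_mono {θ : HVar n k → Option Bool} {a b : HVar n k → Bool}
    (hab : ∀ v, a v = true → b v = true) (v : HVar n k) :
    val θ a v = true → val θ b v = true := by
  unfold val; cases h : θ v with
  | none => exact hab v
  | some c => exact id

lemma EVP_mono {θ : HVar n k → Option Bool} {a b : HVar n k → Bool}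
    (hab : ∀ v, a v = true → b v = true) {l : Fin (k+1)} :
    EVP l θ a → EVP l θ b := by
  rintro ⟨i, j, h1, h2⟩
  exact ⟨i, j, val_mono hab _ h1, val_mono hab _ h2⟩

/-- single-variable probe -/
noncomputable def pr1 (w : HVar n k) : HVar n k → Bool := fun v => pb (v = w)

/-- two-variable probe -/
noncomputable def pr2 (w1 w2 : HVar n k) : HVar n k → Bool := fun v => pb (v = w1 ∨ v = w2)

/-- left variable of `P_{l,P}` -/
def Lv (l : Fin (k+1)) (P : Fin n × Fin n) : HVar n k := cvar n k l.1 P.1 P.2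
/-- right variable of `P_{l,P}` -/
def Rv (l : Fin (k+1)) (P : Fin n × Fin n) : HVar n k := cvar n k (l.1+1) P.1 P.2

lemma Lv_pos_le (l : Fin (k+1)) : l.1 ≤ k + 1 := by omega
lemma Rv_pos_le (l : Fin (k+1)) : l.1 + 1 ≤ k + 1 := by have := l.isLt; omega

lemma Lv_ne_Rv (l : Fin (k+1)) (P : Fin n × Fin n) : Lv l P ≠ Rv l P := by
  intro h
  have := (cvar_eq_elim (Lv_pos_le l) (Rv_pos_le l) h).1
  omega

/-- Pointwise characterization of transversality. -/
def TrChar (θ : HVar n k → Option Bool) (P : Fin n × Fin n) : Prop :=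
  ∀ l : Fin (k+1),
    EVP l θ (pr2 (Lv l P) (Rv l P)) ∧ ¬ EVP l θ (pr1 (Lv l P)) ∧ ¬ EVP l θ (pr1 (Rv l P))

lemma Pterm_eq_some (l : Fin (k+1)) (P : Fin n × Fin n) (v : HVar n k) (b : Bool) :
    Pterm n k l P.1 P.2 v = some b ↔ ((v = Lv l P ∨ v = Rv l P) ∧ b = true) := by
  unfold Pterm
  rw [leftVar_eq, rightVar_eq]
  by_cases h : v = Lv l P ∨ v = Rv l P
  · simp only [Lv, Rv] at h
    simp [h, Lv, Rv, eq_comm]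
  · simp only [Lv, Rv] at h
    simp [h, Lv, Rv]

lemma trans_iff (θ : HVar n k → Option Bool) (P : Fin n × Fin n) :
    Transversal n k θ P ↔ TrChar θ P := by
  constructor
  · intro h l
    obtain ⟨hTI, hmin⟩ := h l
    refine ⟨?_, ?_, ?_⟩
    · refine (evB_iff _ _ _).1 ?_
      apply hTI
      intro v b hv
      obtain ⟨hvor, hb⟩ := (Pterm_eq_some l P v b).1 hv
      subst hb
      exact pb_true hvor
    · -- τ' = single (Lv l P) true
      intro hEV
      have hsub : BF.Subterm (BF.single (Lv l P) true) (Pterm n k l P.1 P.2) := by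
        intro v b hv
        unfold BF.single at hv
        by_cases hvl : v = Lv l P
        · simp [hvl] at hv
          subst hv
          exact (Pterm_eq_some l P v true).2 ⟨Or.inl hvl, rfl⟩
        · simp [hvl] at hv
      have hne : BF.single (Lv l P) true ≠ Pterm n k l P.1 P.2 := by
        intro hcontra
        have := congrFun hcontra (Rv l P)
        unfold BF.single at this
        rw [if_neg (Ne.symm (Lv_ne_Rv l P) : Rv l P ≠ Lv l P)] at this
        have h2 := (Pterm_eq_some l P (Rv l P) true).2 ⟨Or.inr rfl, rfl⟩
        rw [h2] at this
        exact nomatch this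
      have hnTI := hmin _ hsub hne
      apply hnTI
      intro a hcons
      refine (evB_iff l θ a).2 (EVP_mono ?_ hEV)
      intro v hv
      have : v = Lv l P := by simpa [pr1] using hv
      subst this
      apply hcons
      unfold BF.single
      simp
    · intro hEV
      have hsub : BF.Subterm (BF.single (Rv l P) true) (Pterm n k l P.1 P.2) := by
        intro v b hv
        unfold BF.single at hv
        by_cases hvl : v = Rv l P
        · simp [hvl] at hv
          subst hv
          exact (Pterm_eq_some l P v true).2 ⟨Or.inr hvl, rfl⟩
        · simp [hvl] at hv
      have hne : BF.single (Rv l P) true ≠ Pterm n k l P.1 P.2 := by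
        intro hcontra
        have := congrFun hcontra (Lv l P)
        unfold BF.single at this
        rw [if_neg (Lv_ne_Rv l P)] at this
        have h2 := (Pterm_eq_some l P (Lv l P) true).2 ⟨Or.inl rfl, rfl⟩
        rw [h2] at this
        exact nomatch this
      have hnTI := hmin _ hsub hne
      apply hnTI
      intro a hcons
      refine (evB_iff l θ a).2 (EVP_mono ?_ hEV)
      intro v hv
      have : v = Rv l P := by simpa [pr1] using hv
      subst this
      apply hcons
      unfold BF.single
      simp
  · intro h l
    obtain ⟨h1, h2, h3⟩ := h l
    constructor
    · intro a hcons
      refine (evB_iff l θ a).2 (EVP_mono ?_ h1)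
      intro v hv
      have hvor : v = Lv l P ∨ v = Rv l P := by simpa [pr2] using hv
      exact hcons v true ((Pterm_eq_some l P v true).2 ⟨hvor, rfl⟩)
    · intro τ' hsub hne hTI
      -- find v with τ' v = none but Pterm v = some true
      have hv : ∃ v, τ' v ≠ Pterm n k l P.1 P.2 v := by
        by_contra hc
        push_neg at hc
        exact hne (funext hc)
      obtain ⟨v, hvne⟩ := hv
      have hvP : Pterm n k l P.1 P.2 v = some true ∧ τ' v = none := by
        cases hτ : τ' v with
        | some b =>
          have := hsub v b hτ
          rw [hτ, this] at hvne
          exact absurd rfl hvne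
        | none =>
          cases hP : Pterm n k l P.1 P.2 v with
          | none => rw [hτ, hP] at hvne; exact absurd rfl hvne
          | some b =>
            have hb := ((Pterm_eq_some l P v b).1 hP).2
            subst hb
            exact ⟨rfl, rfl⟩
      have hvor : v = Lv l P ∨ v = Rv l P := ((Pterm_eq_some l P v true).1 hvP.1).1
      cases hvor with
      | inr hvR =>
        -- use probe pr1 (Lv l P)
        apply h2
        refine (evB_iff _ _ _).1 ?_
        apply hTI
        intro w b hw
        have hwor := (Pterm_eq_some l P w b).1 (hsub w b hw)
        obtain ⟨hwor, hb⟩ := hwor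
        subst hb
        cases hwor with
        | inl hwL => subst hwL; exact pb_true rfl
        | inr hwR =>
          exfalso
          rw [hwR, ← hvR] at hw
          rw [hvP.2] at hw
          exact nomatch hw
      | inl hvL =>
        apply h3
        refine (evB_iff _ _ _).1 ?_
        apply hTI
        intro w b hw
        have hwor := (Pterm_eq_some l P w b).1 (hsub w b hw)
        obtain ⟨hwor, hb⟩ := hwor
        subst hb
        cases hwor with
        | inr hwR => subst hwR; exact pb_true rfl
        | inl hwL =>
          exfalso
          rw [hwL, ← hvL] at hw
          rw [hvP.2] at hw
          exact nomatch hw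

end S17
namespace S17
open Classical
variable {n k : ℕ}

/-- Structural facts about `θ` around a transversal pair `P`. -/
structure Facts (θ : HVar n k → Option Bool) (P : Fin n × Fin n) : Prop where
  hA : ∀ q, q ≤ k+1 → θ (cvar n k q P.1 P.2) = none
  hB1 : ∀ j', θ (cvar n k 1 P.1 j') ≠ some true
  hBk : ∀ i', θ (cvar n k k i' P.2) ≠ some true
  hC : ∀ l : Fin (k+1), ¬ EVP l θ (fun _ => false)

lemma facts_of_char {θ : HVar n k → Option Bool} {P : Fin n × Fin n}
    (h : TrChar θ P) : Facts θ P := by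
  have hLF : ∀ l : Fin (k+1), θ (Lv l P) ≠ some false := by
    intro l hfalse
    obtain ⟨h1, h2, h3⟩ := h l
    apply h3
    obtain ⟨i', j', hw1, hw2⟩ := h1
    have conv : ∀ w, val θ (pr2 (Lv l P) (Rv l P)) w = true → val θ (pr1 (Rv l P)) w = true := by
      intro w hw
      rcases (val_true_iff _ _ _).1 hw with ht | ⟨hnone, hpw⟩
      · exact (val_true_iff _ _ _).2 (Or.inl ht)
      · rcases (pb_iff).1 hpw with hwL | hwR
        · rw [hwL, hfalse] at hnone; exact nomatch hnone
        · exact (val_true_iff _ _ _).2 (Or.inr ⟨hnone, by rw [hwR]; exact pb_true rfl⟩)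
    exact ⟨i', j', conv _ hw1, conv _ hw2⟩
  have hRF : ∀ l : Fin (k+1), θ (Rv l P) ≠ some false := by
    intro l hfalse
    obtain ⟨h1, h2, h3⟩ := h l
    apply h2
    obtain ⟨i', j', hw1, hw2⟩ := h1
    have conv : ∀ w, val θ (pr2 (Lv l P) (Rv l P)) w = true → val θ (pr1 (Lv l P)) w = true := by
      intro w hw
      rcases (val_true_iff _ _ _).1 hw with ht | ⟨hnone, hpw⟩
      · exact (val_true_iff _ _ _).2 (Or.inl ht)
      · rcases (pb_iff).1 hpw with hwL | hwR
        · exact (val_true_iff _ _ _).2 (Or.inr ⟨hnone, by rw [hwL]; exact pb_true rfl⟩)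
        · rw [hwR, hfalse] at hnone; exact nomatch hnone
    exact ⟨i', j', conv _ hw1, conv _ hw2⟩
  have hLT : ∀ l : Fin (k+1), θ (Lv l P) ≠ some true := by
    intro l htrue
    obtain ⟨h1, h2, h3⟩ := h l
    apply h3
    refine ⟨P.1, P.2, (val_true_iff _ _ _).2 (Or.inl htrue), ?_⟩
    cases hR : θ (Rv l P) with
    | none => exact (val_true_iff _ _ _).2 (Or.inr ⟨hR, pb_true rfl⟩)
    | some b =>
      cases b with
      | true => exact (val_true_iff _ _ _).2 (Or.inl hR)
      | false => exact absurd hR (hRF l)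
  have hRT : ∀ l : Fin (k+1), θ (Rv l P) ≠ some true := by
    intro l htrue
    obtain ⟨h1, h2, h3⟩ := h l
    apply h2
    refine ⟨P.1, P.2, ?_, (val_true_iff _ _ _).2 (Or.inl htrue)⟩
    cases hL : θ (Lv l P) with
    | none => exact (val_true_iff _ _ _).2 (Or.inr ⟨hL, pb_true rfl⟩)
    | some b =>
      cases b with
      | true => exact (val_true_iff _ _ _).2 (Or.inl hL)
      | false => exact absurd hL (hLF l)
  have hA : ∀ q, q ≤ k+1 → θ (cvar n k q P.1 P.2) = none := by
    intro q hq
    by_cases hqk : q ≤ k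
    · have hl : q < k + 1 := by omega
      have : cvar n k q P.1 P.2 = Lv ⟨q, hl⟩ P := rfl
      rw [this]
      cases hv : θ (Lv ⟨q, hl⟩ P) with
      | none => rfl
      | some b =>
        cases b with
        | true => exact absurd hv (hLT _)
        | false => exact absurd hv (hLF _)
    · have hq1 : q = k + 1 := by omega
      subst hq1
      have : cvar n k (k+1) P.1 P.2 = Rv ⟨k, by omega⟩ P := rfl
      rw [this]
      cases hv : θ (Rv ⟨k, by omega⟩ P) with
      | none => rfl
      | some b =>
        cases b with
        | true => exact absurd hv (hRT _)
        | false => exact absurd hv (hRF _)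
  refine ⟨hA, ?_, ?_, ?_⟩
  · intro j' htrue
    have l0 : Fin (k+1) := ⟨0, by omega⟩
    apply (h ⟨0, by omega⟩).2.1
    refine ⟨P.1, j', ?_, ?_⟩
    · have e1 : cvar n k (0:ℕ) P.1 j' = Lv ⟨0, by omega⟩ P := by
        rw [cvar_zero]; unfold Lv; rw [cvar_zero]
      rw [e1]
      exact (val_true_iff _ _ _).2 (Or.inr ⟨hA 0 (by omega), pb_true rfl⟩)
    · exact (val_true_iff _ _ _).2 (Or.inl htrue)
  · intro i' htrue
    apply (h ⟨k, by omega⟩).2.2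
    refine ⟨i', P.2, ?_, ?_⟩
    · exact (val_true_iff _ _ _).2 (Or.inl htrue)
    · have e1 : cvar n k (k+1) i' P.2 = Rv ⟨k, by omega⟩ P := by
        rw [cvar_top]; unfold Rv; rw [cvar_top]
      rw [e1]
      exact (val_true_iff _ _ _).2 (Or.inr ⟨hA (k+1) (by omega), pb_true rfl⟩)
  · intro l hEV
    exact (h l).2.1 (EVP_mono (fun v hv => absurd hv (by simp)) hEV)

/-- `v` lies on the chain of the pair `P`. -/
def InChain (P : Fin n × Fin n) (v : HVar n k) : Prop :=
  ∃ q, q ≤ k+1 ∧ v = cvar n k q P.1 P.2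

lemma chain_pos_left {q : ℕ} (hq : q ≤ k+1) {i' j' : Fin n} {P : Fin n × Fin n}
    (l : Fin (k+1)) (h : cvar n k l.1 i' j' = cvar n k q P.1 P.2) :
    q = l.1 ∧ (l.1 = 0 → i' = P.1) ∧ (1 ≤ l.1 → i' = P.1 ∧ j' = P.2) := by
  have e := cvar_eq_elim (Lv_pos_le l) hq h
  have hlk : l.1 ≤ k := by omega
  exact ⟨e.1.symm, e.2.1, fun h1 => e.2.2.2 h1 hlk⟩

lemma chain_pos_right {q : ℕ} (hq : q ≤ k+1) {i' j' : Fin n} {P : Fin n × Fin n}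
    (l : Fin (k+1)) (h : cvar n k (l.1+1) i' j' = cvar n k q P.1 P.2) :
    q = l.1+1 ∧ (l.1 = k → j' = P.2) ∧ (l.1 < k → i' = P.1 ∧ j' = P.2) := by
  have e := cvar_eq_elim (Rv_pos_le l) hq h
  refine ⟨e.1.symm, fun hlk => e.2.2.1 (by omega), fun hlk => e.2.2.2 (by omega) (by omega)⟩

lemma SEV (hk : 1 ≤ k) {θ : HVar n k → Option Bool} {P : Fin n × Fin n} (hF : Facts θ P)
    {a : HVar n k → Bool} (hs : ∀ v, a v = true → InChain P v) (l : Fin (k+1)) :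
    EVP l θ a ↔ (a (Lv l P) = true ∧ a (Rv l P) = true) := by
  constructor
  · rintro ⟨i', j', hw1, hw2⟩
    rcases (val_true_iff _ _ _).1 hw1 with ht1 | ⟨hn1, ha1⟩ <;>
      rcases (val_true_iff _ _ _).1 hw2 with ht2 | ⟨hn2, ha2⟩
    · exact absurd ⟨i', j', (val_true_iff _ _ _).2 (Or.inl ht1),
        (val_true_iff _ _ _).2 (Or.inl ht2)⟩ (hF.hC l)
    · obtain ⟨q, hq, he⟩ := hs _ ha2
      obtain ⟨hq2, hjk, hmid⟩ := chain_pos_right hq l he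
      by_cases hlk : l.1 < k
      · obtain ⟨hi, hj⟩ := hmid hlk
        subst hi; subst hj
        exact absurd ht1 (by rw [hF.hA l.1 (by omega)]; simp)
      · have hlk' : l.1 = k := by omega
        have hj := hjk hlk'
        subst hj
        rw [hlk'] at ht1
        exact absurd ht1 (hF.hBk i')
    · obtain ⟨q, hq, he⟩ := hs _ ha1
      obtain ⟨hq1, h0, hmid⟩ := chain_pos_left hq l he
      by_cases hl1 : 1 ≤ l.1
      · obtain ⟨hi, hj⟩ := hmid hl1
        subst hi; subst hj
        exact absurd ht2 (by rw [hF.hA (l.1+1) (Rv_pos_le l)]; simp)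
      · have hl0 : l.1 = 0 := by omega
        have hi := h0 hl0
        subst hi
        rw [hl0] at ht2
        exact absurd ht2 (hF.hB1 j')
    · obtain ⟨q, hq, he⟩ := hs _ ha1
      obtain ⟨hq1, h0, hmid⟩ := chain_pos_left hq l he
      by_cases hl1 : 1 ≤ l.1
      · obtain ⟨hi, hj⟩ := hmid hl1
        subst hi; subst hj
        exact ⟨ha1, ha2⟩
      · have hl0 : l.1 = 0 := by omega
        have hi := h0 hl0
        subst hi
        obtain ⟨q', hq', he'⟩ := hs _ ha2
        obtain ⟨hq2, hjk, hmid'⟩ := chain_pos_right hq' l he'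
        have hlk : l.1 < k := by omega
        obtain ⟨_, hj⟩ := hmid' hlk
        subst hj
        exact ⟨ha1, ha2⟩
  · rintro ⟨h1, h2⟩
    exact ⟨P.1, P.2, (val_true_iff _ _ _).2 (Or.inr ⟨hF.hA l.1 (Lv_pos_le l), h1⟩),
      (val_true_iff _ _ _).2 (Or.inr ⟨hF.hA (l.1+1) (Rv_pos_le l), h2⟩)⟩

lemma LOC_dir {θ : HVar n k → Option Bool} {P : Fin n × Fin n} {a b : HVar n k → Bool}
    (hsa : ∀ v, a v = true → InChain P v)
    (l : Fin (k+1))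
    (h1 : a (Lv l P) = b (Lv l P)) (h2 : a (Rv l P) = b (Rv l P)) :
    EVP l θ a → EVP l θ b := by
  rintro ⟨i', j', hw1, hw2⟩
  refine ⟨i', j', ?_, ?_⟩
  · rcases (val_true_iff _ _ _).1 hw1 with ht | ⟨hn, ha⟩
    · exact (val_true_iff _ _ _).2 (Or.inl ht)
    · obtain ⟨q, hq, he⟩ := hsa _ ha
      obtain ⟨hq1, -, -⟩ := chain_pos_left hq l he
      subst hq1
      have hw : cvar n k l.1 i' j' = Lv l P := he
      rw [hw] at ha hn ⊢
      exact (val_true_iff _ _ _).2 (Or.inr ⟨hn, by rw [← h1]; exact ha⟩)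
  · rcases (val_true_iff _ _ _).1 hw2 with ht | ⟨hn, ha⟩
    · exact (val_true_iff _ _ _).2 (Or.inl ht)
    · obtain ⟨q, hq, he⟩ := hsa _ ha
      obtain ⟨hq1, -, -⟩ := chain_pos_right hq l he
      subst hq1
      have hw : cvar n k (l.1+1) i' j' = Rv l P := he
      rw [hw] at ha hn ⊢
      exact (val_true_iff _ _ _).2 (Or.inr ⟨hn, by rw [← h2]; exact ha⟩)

lemma LOC {θ : HVar n k → Option Bool} {P : Fin n × Fin n} {a b : HVar n k → Bool}
    (hsa : ∀ v, a v = true → InChain P v) (hsb : ∀ v, b v = true → InChain P v)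
    (l : Fin (k+1))
    (h1 : a (Lv l P) = b (Lv l P)) (h2 : a (Rv l P) = b (Rv l P)) :
    EVP l θ a ↔ EVP l θ b :=
  ⟨LOC_dir hsa l h1 h2, LOC_dir hsb l h1.symm h2.symm⟩

end S17
namespace S17
open Classical
variable {n k : ℕ}

lemma EV3 (hk : 1 ≤ k) {θ : HVar n k → Option Bool} (u : Fin 3 → Fin n × Fin n)
    (hindI : ∀ t t', (u t).1 = (u t').1 → t = t')
    (hindJ : ∀ t t', (u t).2 = (u t').2 → t = t')
    {a : HVar n k → Bool} (hs : ∀ v, a v = true → ∃ t, InChain (u t) v) (l : Fin (k+1)) :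
    EVP l θ a ↔ ∃ t, EVP l θ (fun v => a v && pb (InChain (u t) v)) := by
  constructor
  · rintro ⟨i', j', hw1, hw2⟩
    rcases (val_true_iff _ _ _).1 hw1 with ht1 | ⟨hn1, ha1⟩ <;>
      rcases (val_true_iff _ _ _).1 hw2 with ht2 | ⟨hn2, ha2⟩
    · exact ⟨0, i', j', (val_true_iff _ _ _).2 (Or.inl ht1),
        (val_true_iff _ _ _).2 (Or.inl ht2)⟩
    · obtain ⟨t, hch⟩ := hs _ ha2
      refine ⟨t, i', j', (val_true_iff _ _ _).2 (Or.inl ht1),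
        (val_true_iff _ _ _).2 (Or.inr ⟨hn2, ?_⟩)⟩
      rw [Bool.and_eq_true]; exact ⟨ha2, pb_true hch⟩
    · obtain ⟨t, hch⟩ := hs _ ha1
      refine ⟨t, i', j', (val_true_iff _ _ _).2 (Or.inr ⟨hn1, ?_⟩),
        (val_true_iff _ _ _).2 (Or.inl ht2)⟩
      rw [Bool.and_eq_true]; exact ⟨ha1, pb_true hch⟩
    · obtain ⟨t1, q, hq, he1⟩ := hs _ ha1
      obtain ⟨t2, q', hq', he2⟩ := hs _ ha2
      obtain ⟨hq1, h0, hmid1⟩ := chain_pos_left hq l he1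
      obtain ⟨hq2, hjk, hmid2⟩ := chain_pos_right hq' l he2
      have ht12 : t1 = t2 := by
        by_cases hl1 : 1 ≤ l.1
        · obtain ⟨hi1, hj1⟩ := hmid1 hl1
          by_cases hlk : l.1 < k
          · obtain ⟨hi2, hj2⟩ := hmid2 hlk
            exact hindI t1 t2 (by rw [← hi1, ← hi2])
          · have hj2 := hjk (by omega)
            exact hindJ t1 t2 (by rw [← hj1, ← hj2])
        · have hl0 : l.1 = 0 := by omega
          have hi1 := h0 hl0
          have hlk : l.1 < k := by omega
          obtain ⟨hi2, hj2⟩ := hmid2 hlk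
          exact hindI t1 t2 (by rw [← hi1, ← hi2])
      subst ht12
      refine ⟨t1, i', j', (val_true_iff _ _ _).2 (Or.inr ⟨hn1, ?_⟩),
        (val_true_iff _ _ _).2 (Or.inr ⟨hn2, ?_⟩)⟩
      · rw [Bool.and_eq_true]; exact ⟨ha1, pb_true ⟨q, hq, he1⟩⟩
      · rw [Bool.and_eq_true]; exact ⟨ha2, pb_true ⟨q', hq', he2⟩⟩
  · rintro ⟨t, hEV⟩
    exact EVP_mono (fun v hv => by rw [Bool.and_eq_true] at hv; exact hv.1) hEV

lemma EV4 (hk : 1 ≤ k) {θ : HVar n k → Option Bool} (u : Fin 3 → Fin n × Fin n)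
    (p : Fin n × Fin n)
    (hindI : ∀ t t', (u t).1 = (u t').1 → t = t')
    (hindJ : ∀ t t', (u t).2 = (u t').2 → t = t')
    (hup : ∀ t, u t ≠ p)
    (hF : ∀ t, Facts θ (u t))
    {a : HVar n k → Bool}
    (hs : ∀ v, a v = true → InChain p v ∨ ∃ t, InChain (u t) v)
    (hb1 : ∀ t, (u t).1 = p.1 → a (cvar n k 1 (u t).1 (u t).2) = false)
    (hbk : ∀ t, (u t).2 = p.2 → a (cvar n k k (u t).1 (u t).2) = false)
    (l : Fin (k+1)) :
    EVP l θ a ↔ (EVP l θ (fun v => a v && pb (InChain p v)) ∨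
      ∃ t, a (Lv l (u t)) = true ∧ a (Rv l (u t)) = true) := by
  constructor
  · rintro ⟨i', j', hw1, hw2⟩
    rcases (val_true_iff _ _ _).1 hw1 with ht1 | ⟨hn1, ha1⟩ <;>
      rcases (val_true_iff _ _ _).1 hw2 with ht2 | ⟨hn2, ha2⟩
    -- both θ-true
    · exact Or.inl ⟨i', j', (val_true_iff _ _ _).2 (Or.inl ht1),
        (val_true_iff _ _ _).2 (Or.inl ht2)⟩
    -- w1 θ-true, w2 probe
    · rcases hs _ ha2 with hp | ⟨t, hch⟩
      · refine Or.inl ⟨i', j', (val_true_iff _ _ _).2 (Or.inl ht1),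
          (val_true_iff _ _ _).2 (Or.inr ⟨hn2, ?_⟩)⟩
        rw [Bool.and_eq_true]; exact ⟨ha2, pb_true hp⟩
      · obtain ⟨q', hq', he2⟩ := hch
        obtain ⟨hq2, hjk, hmid⟩ := chain_pos_right hq' l he2
        by_cases hlk : l.1 < k
        · obtain ⟨hi, hj⟩ := hmid hlk
          subst hi; subst hj
          exact absurd ht1 (by rw [(hF t).hA l.1 (by omega)]; simp)
        · have hj := hjk (by omega)
          subst hj
          rw [show l.1 = k by omega] at ht1
          exact absurd ht1 ((hF t).hBk i')
    -- w1 probe, w2 θ-true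
    · rcases hs _ ha1 with hp | ⟨t, hch⟩
      · refine Or.inl ⟨i', j', (val_true_iff _ _ _).2 (Or.inr ⟨hn1, ?_⟩),
          (val_true_iff _ _ _).2 (Or.inl ht2)⟩
        rw [Bool.and_eq_true]; exact ⟨ha1, pb_true hp⟩
      · obtain ⟨q, hq, he1⟩ := hch
        obtain ⟨hq1, h0, hmid⟩ := chain_pos_left hq l he1
        by_cases hl1 : 1 ≤ l.1
        · obtain ⟨hi, hj⟩ := hmid hl1
          subst hi; subst hj
          exact absurd ht2 (by rw [(hF t).hA (l.1+1) (Rv_pos_le l)]; simp)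
        · have hl0 : l.1 = 0 := by omega
          have hi := h0 hl0
          subst hi
          rw [hl0] at ht2
          exact absurd ht2 ((hF t).hB1 j')
    -- both probe
    · rcases hs _ ha1 with hp1 | ⟨t1, hch1⟩ <;> rcases hs _ ha2 with hp2 | ⟨t2, hch2⟩
      -- p,p
      · refine Or.inl ⟨i', j', (val_true_iff _ _ _).2 (Or.inr ⟨hn1, ?_⟩),
          (val_true_iff _ _ _).2 (Or.inr ⟨hn2, ?_⟩)⟩
        · rw [Bool.and_eq_true]; exact ⟨ha1, pb_true hp1⟩
        · rw [Bool.and_eq_true]; exact ⟨ha2, pb_true hp2⟩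
      -- p, u t2
      · obtain ⟨q, hq, he1⟩ := hp1
        obtain ⟨hq1, h0, hmid1⟩ := chain_pos_left hq l he1
        obtain ⟨q', hq', he2⟩ := hch2
        obtain ⟨hq2, hjk, hmid2⟩ := chain_pos_right hq' l he2
        by_cases hl1 : 1 ≤ l.1
        · obtain ⟨hi1, hj1⟩ := hmid1 hl1
          by_cases hlk : l.1 < k
          · obtain ⟨hi2, hj2⟩ := hmid2 hlk
            exact absurd (Prod.ext (by rw [← hi2]; exact hi1) (by rw [← hj2]; exact hj1)) (hup t2)
          · -- l.1 = k : w2 = T j' with j' = p.2 : w2 is on p's chain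
            have hj2 := hjk (by omega)
            refine Or.inl ⟨i', j', (val_true_iff _ _ _).2 (Or.inr ⟨hn1, ?_⟩),
              (val_true_iff _ _ _).2 (Or.inr ⟨hn2, ?_⟩)⟩
            · rw [Bool.and_eq_true]; exact ⟨ha1, pb_true ⟨q, hq, he1⟩⟩
            · rw [Bool.and_eq_true]
              refine ⟨ha2, pb_true ⟨l.1+1, Rv_pos_le l, ?_⟩⟩
              have hl : l.1 = k := by omega
              rw [hl, cvar_top, cvar_top, hj1]
        · have hl0 : l.1 = 0 := by omega
          have hi1 := h0 hl0
          have hlk : l.1 < k := by omega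
          obtain ⟨hi2, hj2⟩ := hmid2 hlk
          -- i' = p.1 and i' = (u t2).1 : shared index; ban applies to w2 = cvar 1 (u t2)
          exfalso
          have hsh : (u t2).1 = p.1 := by rw [← hi2, hi1]
          have hban := hb1 t2 hsh
          have hw2 : cvar n k (l.1+1) i' j' = cvar n k 1 (u t2).1 (u t2).2 := by
            rw [hl0, hi2, hj2]
          rw [hw2] at ha2
          rw [ha2] at hban
          exact Bool.noConfusion hban
      -- u t1, p
      · obtain ⟨q, hq, he1⟩ := hch1
        obtain ⟨hq1, h0, hmid1⟩ := chain_pos_left hq l he1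
        obtain ⟨q', hq', he2⟩ := hp2
        obtain ⟨hq2, hjk, hmid2⟩ := chain_pos_right hq' l he2
        by_cases hl1 : 1 ≤ l.1
        · obtain ⟨hi1, hj1⟩ := hmid1 hl1
          by_cases hlk : l.1 < k
          · obtain ⟨hi2, hj2⟩ := hmid2 hlk
            exact absurd (Prod.ext (by rw [← hi1]; exact hi2) (by rw [← hj1]; exact hj2)) (hup t1)
          · -- l.1 = k : j' = p.2 and (u t1).2 = j' : ban on w1 = cvar k (u t1)
            exfalso
            have hj2 := hjk (by omega)
            have hsh : (u t1).2 = p.2 := by rw [← hj1, hj2]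
            have hban := hbk t1 hsh
            have hw1 : cvar n k l.1 i' j' = cvar n k k (u t1).1 (u t1).2 := by
              rw [show l.1 = k by omega, hi1, hj1]
            rw [hw1] at ha1
            rw [ha1] at hban
            exact Bool.noConfusion hban
        · have hl0 : l.1 = 0 := by omega
          have hi1 := h0 hl0
          have hlk : l.1 < k := by omega
          obtain ⟨hi2, hj2⟩ := hmid2 hlk
          -- i' = (u t1).1 and i' = p.1 : w1 = R i' lies on p's chain as well
          refine Or.inl ⟨i', j', (val_true_iff _ _ _).2 (Or.inr ⟨hn1, ?_⟩),
            (val_true_iff _ _ _).2 (Or.inr ⟨hn2, ?_⟩)⟩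
          · rw [Bool.and_eq_true]
            refine ⟨ha1, pb_true ⟨0, by omega, ?_⟩⟩
            rw [hl0, cvar_zero, cvar_zero, hi2]
          · rw [Bool.and_eq_true]; exact ⟨ha2, pb_true ⟨q', hq', he2⟩⟩
      -- u t1, u t2
      · obtain ⟨q, hq, he1⟩ := hch1
        obtain ⟨hq1, h0, hmid1⟩ := chain_pos_left hq l he1
        obtain ⟨q', hq', he2⟩ := hch2
        obtain ⟨hq2, hjk, hmid2⟩ := chain_pos_right hq' l he2
        have ht12 : t1 = t2 := by
          by_cases hl1 : 1 ≤ l.1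
          · obtain ⟨hi1, hj1⟩ := hmid1 hl1
            by_cases hlk : l.1 < k
            · obtain ⟨hi2, hj2⟩ := hmid2 hlk
              exact hindI t1 t2 (by rw [← hi1, ← hi2])
            · have hj2 := hjk (by omega)
              exact hindJ t1 t2 (by rw [← hj1, ← hj2])
          · have hl0 : l.1 = 0 := by omega
            have hi1 := h0 hl0
            have hlk : l.1 < k := by omega
            obtain ⟨hi2, hj2⟩ := hmid2 hlk
            exact hindI t1 t2 (by rw [← hi1, ← hi2])
        subst ht12
        refine Or.inr ⟨t1, ?_, ?_⟩
        · -- a (Lv l (u t1)) : show w1 = Lv l (u t1)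
          by_cases hl1 : 1 ≤ l.1
          · obtain ⟨hi1, hj1⟩ := hmid1 hl1
            have : cvar n k l.1 i' j' = Lv l (u t1) := by unfold Lv; rw [hi1, hj1]
            rw [← this]; exact ha1
          · have hl0 : l.1 = 0 := by omega
            have hi1 := h0 hl0
            have hlk : l.1 < k := by omega
            obtain ⟨hi2, hj2⟩ := hmid2 hlk
            have : cvar n k l.1 i' j' = Lv l (u t1) := by
              unfold Lv; rw [hl0, cvar_zero, cvar_zero, hi1]
            rw [← this]; exact ha1
        · by_cases hlk : l.1 < k
          · obtain ⟨hi2, hj2⟩ := hmid2 hlk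
            have : cvar n k (l.1+1) i' j' = Rv l (u t1) := by unfold Rv; rw [hi2, hj2]
            rw [← this]; exact ha2
          · have hl1 : 1 ≤ l.1 := by omega
            obtain ⟨hi1, hj1⟩ := hmid1 hl1
            have hj2 := hjk (by omega)
            have : cvar n k (l.1+1) i' j' = Rv l (u t1) := by
              unfold Rv; rw [show l.1 = k by omega, cvar_top, cvar_top, hj1]
            rw [← this]; exact ha2
  · rintro (hEV | ⟨t, h1t, h2t⟩)
    · exact EVP_mono (fun v hv => by rw [Bool.and_eq_true] at hv; exact hv.1) hEV
    · exact ⟨(u t).1, (u t).2,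
        (val_true_iff _ _ _).2 (Or.inr ⟨(hF t).hA l.1 (Lv_pos_le l), h1t⟩),
        (val_true_iff _ _ _).2 (Or.inr ⟨(hF t).hA (l.1+1) (Rv_pos_le l), h2t⟩)⟩

end S17
namespace S17
open Classical

lemma parity_real (m : ℕ) (B : ℕ → Bool) (hB : ∀ q, B q = true → q ≤ m) :
    ∃ c : Fin 2 → ℕ → Bool, (∀ t q, c t q = true → q ≤ m+1) ∧
      ∀ l : ℕ, (∃ t, c t l = true ∧ c t (l+1) = true) ↔ B l = true := by
  classical
  set gc : ℕ → ℕ := fun l => ((Finset.range l).filter (fun m' => B m' = false)).card with hgc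
  have gc_succ : ∀ l, gc (l+1) = gc l + (if B l = true then 0 else 1) := by
    intro l
    rw [hgc]
    simp only
    rw [Finset.range_add_one, Finset.filter_insert]
    by_cases hBl : B l = true
    · have : ¬ (B l = false) := by simp [hBl]
      simp [this]
    · have hBl' : B l = false := by revert hBl; cases B l <;> simp
      rw [if_pos hBl', Finset.card_insert_of_notMem (by simp), if_neg hBl]
  have hstep : ∀ l, B l = true → gc (l+1) % 2 = gc l % 2 := by
    intro l hl; rw [gc_succ, if_pos hl]; omega
  have hflip : ∀ l, B l = false → gc (l+1) % 2 ≠ gc l % 2 := by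
    intro l hl
    have : ¬ (B l = true) := by simp [hl]
    rw [gc_succ, if_neg this]
    omega
  refine ⟨fun t q => pb (∃ l, B l = true ∧ gc l % 2 = t.1 ∧ (q = l ∨ q = l+1)), ?_, ?_⟩
  · intro t q hq
    obtain ⟨l, hBl, -, hql⟩ := pb_iff.1 hq
    have := hB l hBl
    omega
  · intro l
    constructor
    · rintro ⟨t, h1, h2⟩
      by_contra hBl
      have hBl' : B l = false := by revert hBl; cases B l <;> simp
      obtain ⟨l1, hB1, hχ1, hql1⟩ := pb_iff.1 h1
      obtain ⟨l2, hB2, hχ2, hql2⟩ := pb_iff.1 h2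
      have hl1 : l = l1 + 1 := by
        rcases hql1 with h | h
        · exfalso; rw [h] at hBl'; rw [hB1] at hBl'; exact Bool.noConfusion hBl'
        · exact h
      have hl2 : l + 1 = l2 := by
        rcases hql2 with h | h
        · exact h
        · exfalso
          have : l = l2 := by omega
          rw [this] at hBl'; rw [hB2] at hBl'; exact Bool.noConfusion hBl'
      -- χ l = χ l1 (since B l1 true and l1 + 1 = l)
      have e1 : gc l % 2 = t.1 := by
        have := hstep l1 hB1
        rw [← hl1] at this
        rw [this]; exact hχ1
      have e2 : gc (l+1) % 2 = t.1 := by rw [hl2]; exact hχ2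
      exact hflip l hBl' (by rw [e1, e2])
    · intro hBl
      refine ⟨⟨gc l % 2, by omega⟩, ?_, ?_⟩
      · exact pb_true ⟨l, hBl, rfl, Or.inl rfl⟩
      · exact pb_true ⟨l, hBl, rfl, Or.inr rfl⟩

lemma real3 {k : ℕ} (hk : 1 ≤ k) (B : ℕ → Bool) (hB : ∀ q, B q = true → q ≤ k) :
    ∃ c : Fin 3 → ℕ → Bool,
      (∀ q, c 0 q = true → 2 ≤ q ∧ q ≤ k+1) ∧
      (∀ q, c 1 q = true → q ≤ k-1) ∧
      (∀ q, c 2 q = true → q ≤ k+1) ∧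
      (∀ l : ℕ, (∃ t, c t l = true ∧ c t (l+1) = true) ↔ B l = true) := by
  classical
  by_cases hemp : ∀ l, B l = true → False
  · refine ⟨fun _ _ => false, by simp, by simp, by simp, ?_⟩
    intro l
    constructor
    · rintro ⟨t, h1, -⟩; exact Bool.noConfusion h1
    · intro h; exact absurd h (fun hh => hemp l hh)
  · push_neg at hemp
    obtain ⟨l0, hl0⟩ := hemp
    replace hl0 := hl0.1
    set M := Nat.findGreatest (fun m => B m = true) k with hM
    have hBM : B M = true := by
      have h := Nat.findGreatest_spec (P := fun m => B m = true) (m := l0) (n := k)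
        (hB l0 hl0) hl0
      rw [hM]; exact h
    have hgt : ∀ m, B m = true → m ≤ M := by
      intro m hm
      by_contra hc
      push_neg at hc
      exact Nat.findGreatest_is_greatest (P := fun m => B m = true) hc (hB m hm) hm
    have hMk : M ≤ k := Nat.findGreatest_le k
    set Q : ℕ → Prop := fun s => ∀ m2, s ≤ m2 → m2 ≤ M → B m2 = true with hQdef
    have hQM : Q M := by
      intro m2 h1 h2
      have : m2 = M := by omega
      rw [this]; exact hBM
    have hQex : ∃ s, Q s := ⟨M, hQM⟩
    set t0 := Nat.find hQex with ht0
    have hQ : Q t0 := Nat.find_spec hQex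
    have hmin : ∀ s, s < t0 → ¬ Q s := fun s hs => Nat.find_min hQex hs
    have ht0M : t0 ≤ M := Nat.find_min' hQex hQM
    have hb2 : ∀ b, B b = true → b < t0 → b + 2 ≤ t0 := by
      intro b hb hbt
      by_contra hc
      push_neg at hc
      have hbt0 : b + 1 = t0 := by omega
      apply hmin b hbt
      intro m2 h1 h2
      rcases Nat.eq_or_lt_of_le h1 with he | hlt
      · rw [← he]; exact hb
      · exact hQ m2 (by omega) h2
    by_cases hrun : ∀ b, B b = true → t0 ≤ b
    · -- single run: use chain 2
      refine ⟨fun t q => if t = 2 then pb (t0 ≤ q ∧ q ≤ M+1) else false, ?_, ?_, ?_, ?_⟩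
      · intro q hq; dsimp only at hq
        rw [if_neg (by decide : ¬((0 : Fin 3) = 2))] at hq; exact Bool.noConfusion hq
      · intro q hq; dsimp only at hq
        rw [if_neg (by decide : ¬((1 : Fin 3) = 2))] at hq; exact Bool.noConfusion hq
      · intro q hq
        dsimp only at hq
        rw [if_pos rfl] at hq
        obtain ⟨-, h2⟩ := pb_iff.1 hq
        omega
      · intro l
        constructor
        · rintro ⟨t, h1, h2⟩
          dsimp only at h1 h2
          by_cases ht : t = 2
          · rw [ht, if_pos rfl] at h1 h2
            obtain ⟨ha, -⟩ := pb_iff.1 h1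
            obtain ⟨-, hb⟩ := pb_iff.1 h2
            exact hQ l ha (by omega)
          · rw [if_neg ht] at h1; exact Bool.noConfusion h1
        · intro hBl
          refine ⟨2, ?_, ?_⟩ <;> dsimp only
          · rw [if_pos rfl]
            exact pb_true ⟨hrun l hBl, by have := hgt l hBl; omega⟩
          · rw [if_pos rfl]
            exact pb_true ⟨by have := hrun l hBl; omega, by have := hgt l hBl; omega⟩
    · push_neg at hrun
      obtain ⟨b0, hb0B, hb0lt⟩ := hrun
      have hb0t : b0 < t0 := by omega
      have ht02 : 2 ≤ t0 := by have := hb2 b0 hb0B hb0t; omega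
      set B' : ℕ → Bool := fun q => B q && !(decide (t0 ≤ q)) with hB'def
      have hB' : ∀ q, B' q = true → q ≤ t0 - 2 := by
        intro q hq
        rw [hB'def] at hq
        simp only [Bool.and_eq_true, Bool.not_eq_true', decide_eq_false_iff_not] at hq
        push_neg at hq
        have := hb2 q hq.1 (by omega)
        omega
      obtain ⟨c2, hc2b, hc2iff⟩ := parity_real (t0-2) B' hB'
      refine ⟨fun t q => if t = 0 then pb (t0 ≤ q ∧ q ≤ M+1)
        else if t = 1 then c2 0 q else c2 1 q, ?_, ?_, ?_, ?_⟩
      · intro q hq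
        dsimp only at hq
        rw [if_pos rfl] at hq
        obtain ⟨h1, h2⟩ := pb_iff.1 hq
        omega
      · intro q hq
        dsimp only at hq
        rw [if_neg (by decide : ¬((1:Fin 3) = 0)), if_pos rfl] at hq
        have := hc2b 0 q hq
        omega
      · intro q hq
        dsimp only at hq
        rw [if_neg (by decide : ¬((2:Fin 3) = 0)), if_neg (by decide : ¬((2:Fin 3) = 1))] at hq
        have := hc2b 1 q hq
        omega
      · intro l
        constructor
        · rintro ⟨t, h1, h2⟩
          dsimp only at h1 h2
          by_cases ht0' : t = 0
          · rw [ht0', if_pos rfl] at h1 h2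
            obtain ⟨ha, -⟩ := pb_iff.1 h1
            obtain ⟨-, hbb⟩ := pb_iff.1 h2
            exact hQ l ha (by omega)
          · have hex : ∃ s : Fin 2, c2 s l = true ∧ c2 s (l+1) = true := by
              by_cases ht1 : t = 1
              · rw [ht1, if_neg (by decide : ¬((1:Fin 3) = 0)), if_pos rfl] at h1 h2
                exact ⟨0, h1, h2⟩
              · have ht2 : t = 2 := by omega
                rw [ht2, if_neg (by decide : ¬((2:Fin 3) = 0)),
                  if_neg (by decide : ¬((2:Fin 3) = 1))] at h1 h2
                exact ⟨1, h1, h2⟩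
            have := (hc2iff l).1 hex
            rw [hB'def] at this
            simp only [Bool.and_eq_true] at this
            exact this.1
        · intro hBl
          by_cases hlt : t0 ≤ l
          · refine ⟨0, ?_, ?_⟩ <;> dsimp only
            · rw [if_pos rfl]; exact pb_true ⟨hlt, by have := hgt l hBl; omega⟩
            · rw [if_pos rfl]; exact pb_true ⟨by omega, by have := hgt l hBl; omega⟩
          · have hB'l : B' l = true := by
              rw [hB'def]
              simp only [Bool.and_eq_true, Bool.not_eq_true', decide_eq_false_iff_not]
              exact ⟨hBl, fun h => hlt h⟩
            obtain ⟨s, hs1, hs2⟩ := (hc2iff l).2 hB'l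
            by_cases hs : s = 0
            · refine ⟨1, ?_, ?_⟩ <;> dsimp only <;>
                rw [if_neg (by decide : ¬((1:Fin 3) = 0)), if_pos rfl]
              · rw [← hs]; exact hs1
              · rw [← hs]; exact hs2
            · have hs' : s = 1 := by omega
              refine ⟨2, ?_, ?_⟩ <;> dsimp only <;>
                rw [if_neg (by decide : ¬((2:Fin 3) = 0)), if_neg (by decide : ¬((2:Fin 3) = 1))]
              · rw [← hs']; exact hs1
              · rw [← hs']; exact hs2

end S17
namespace S17
open Classical

section Core
variable {k : ℕ} (f : (Fin (k+1) → Bool) → Bool)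

lemma depends_ne {l : Fin (k+1)} (h : BFDependsOn f l) :
    ∃ μ : Fin (k+1) → Bool,
      f (Function.update μ l false) ≠ f (Function.update μ l true) := by
  obtain ⟨μ, h⟩ := h
  rcases h with h | h
  · exact ⟨μ, by rw [h false, h true]; simp⟩
  · exact ⟨μ, by rw [h false, h true]; simp⟩

lemma core_elim (hdep : ∀ l, BFDependsOn f l)
    (G : Fin (k+1) → Bool → Bool → Prop)
    (hmono : ∀ l (x x' y y' : Bool), (x = true → x' = true) → (y = true → y' = true) →
      G l x y → G l x' y')
    (hID : ∀ B : Fin (k+1) → Bool, ∃ W : Fin (k+1) → Bool, ∀ d : ℕ → Bool,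
      f (fun l => (d l.1 && d (l.1+1)) || B l)
        = f (fun l => pb (G l (d l.1) (d (l.1+1))) || W l)) :
    (∀ l, ¬ G l true false) ∧ (∀ l, ¬ G l false true) ∧ (∀ l, G l true true) := by
  have triv : ∀ (x : Bool), false = true → x = true := fun x h => Bool.noConfusion h
  have idt : ∀ (x : Bool), x = true → x = true := fun x h => h
  have setup : ∀ (l : Fin (k+1)) (d0 d1 : ℕ → Bool),
      (∀ l' : Fin (k+1), (d0 l'.1 && d0 (l'.1+1)) = false) →
      (∀ l' : Fin (k+1), (d1 l'.1 && d1 (l'.1+1)) = pb (l' = l)) →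
      ∃ l' : Fin (k+1),
        (pb (G l' (d0 l'.1) (d0 (l'.1+1)))) ≠ (pb (G l' (d1 l'.1) (d1 (l'.1+1)))) := by
    intro l d0 d1 hs0 hs1
    obtain ⟨μ, hμ⟩ := depends_ne f (hdep l)
    obtain ⟨W, hW⟩ := hID (Function.update μ l false)
    have e0 := hW d0
    have e1 := hW d1
    have lhs0 : (fun l' : Fin (k+1) => (d0 l'.1 && d0 (l'.1+1)) || Function.update μ l false l')
        = Function.update μ l false := by
      funext l'
      rw [hs0 l', Bool.false_or]
    have lhs1 : (fun l' : Fin (k+1) => (d1 l'.1 && d1 (l'.1+1)) || Function.update μ l false l')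
        = Function.update μ l true := by
      funext l'
      rw [hs1 l']
      by_cases h : l' = l
      · subst h
        rw [pb_true rfl, Function.update_self, Function.update_self, Bool.true_or]
      · rw [pb_false h, Bool.false_or, Function.update_of_ne h, Function.update_of_ne h]
    rw [lhs0] at e0
    rw [lhs1] at e1
    by_contra hc
    push_neg at hc
    apply hμ
    rw [e0, e1]
    congr 1
    funext l'
    rw [hc l']
  have main1 : ∀ l : Fin (k+1), G l true false →
      ∃ l' : Fin (k+1), l'.1 = l.1 + 1 ∧ G l' true false := by
    intro l hG
    have hs0 : ∀ l' : Fin (k+1),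
        ((pb (l'.1 = l.1)) && (pb (l'.1 + 1 = l.1))) = false := by
      intro l'
      by_cases h : l'.1 = l.1
      · rw [(pb_false (by omega) : pb (l'.1 + 1 = l.1) = false), Bool.and_false]
      · rw [pb_false h, Bool.false_and]
    have hs1 : ∀ l' : Fin (k+1),
        ((pb (l'.1 = l.1 ∨ l'.1 = l.1+1)) && (pb (l'.1+1 = l.1 ∨ l'.1+1 = l.1+1)))
          = pb (l' = l) := by
      intro l'
      by_cases h : l'.1 = l.1
      · rw [pb_true (Or.inl h), pb_true (Or.inr (by omega)), Bool.true_and,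
          pb_true (Fin.ext h)]
      · by_cases h2 : l'.1 = l.1 + 1
        · rw [(pb_false (by omega) : pb (l'.1 + 1 = l.1 ∨ l'.1 + 1 = l.1 + 1) = false),
            Bool.and_false, pb_false (fun hc => h (congrArg Fin.val hc))]
        · rw [(pb_false (by omega) : pb (l'.1 = l.1 ∨ l'.1 = l.1 + 1) = false),
            Bool.false_and, pb_false (fun hc => h (congrArg Fin.val hc))]
    obtain ⟨l', hl'⟩ := setup l (fun q => pb (q = l.1)) (fun q => pb (q = l.1 ∨ q = l.1+1))
      hs0 hs1
    have hpos : l'.1 = l.1 + 1 ∨ l'.1 = l.1 := by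
      by_contra hc
      push_neg at hc
      apply hl'
      have e1 : pb (l'.1 = l.1) = pb (l'.1 = l.1 ∨ l'.1 = l.1 + 1) := by
        rw [pb_false (by omega), pb_false (by omega)]
      have e2 : pb (l'.1 + 1 = l.1) = pb (l'.1 + 1 = l.1 ∨ l'.1 + 1 = l.1 + 1) := by
        by_cases hy : l'.1 + 1 = l.1
        · rw [pb_true hy, pb_true (Or.inl hy)]
        · rw [pb_false hy, pb_false (by omega)]
      rw [e1, e2]
    rcases hpos with hp | hp
    · refine ⟨l', hp, ?_⟩
      by_contra hGc
      apply hl'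
      rw [(pb_false (by omega) : pb (l'.1 = l.1) = false),
        (pb_false (by omega) : pb (l'.1 + 1 = l.1) = false),
        (pb_true (by omega) : pb (l'.1 = l.1 ∨ l'.1 = l.1 + 1) = true),
        (pb_false (by omega) : pb (l'.1 + 1 = l.1 ∨ l'.1 + 1 = l.1 + 1) = false)]
      have hff : ¬ G l' false false := fun hgff => hGc (hmono l' _ _ _ _ (triv _) (idt _) hgff)
      rw [pb_false hff, pb_false hGc]
    · exfalso
      apply hl'
      have hll : l' = l := Fin.ext hp
      rw [(pb_true hp : pb (l'.1 = l.1) = true),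
        (pb_false (by omega) : pb (l'.1 + 1 = l.1) = false),
        (pb_true (Or.inl hp) : pb (l'.1 = l.1 ∨ l'.1 = l.1 + 1) = true),
        (pb_true (Or.inr (by omega)) : pb (l'.1 + 1 = l.1 ∨ l'.1 + 1 = l.1 + 1) = true)]
      rw [hll]
      rw [pb_true hG, pb_true (hmono _ _ _ _ _ (idt _) (triv _) hG)]
  have h1 : ∀ l, ¬ G l true false := by
    intro l
    induction l using Fin.reverseInduction with
    | last =>
      intro hG
      obtain ⟨l', hl', -⟩ := main1 _ hG
      have h2 := l'.isLt
      simp only [Fin.val_last] at hl'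
      omega
    | cast i ih =>
      intro hG
      obtain ⟨l', hl', hG'⟩ := main1 _ hG
      have : l' = i.succ := by
        apply Fin.ext
        rw [hl']
        simp
      subst this
      exact ih hG'
  have main2 : ∀ l : Fin (k+1), G l false true →
      ∃ l' : Fin (k+1), l'.1 + 1 = l.1 ∧ G l' false true := by
    intro l hG
    have hs0 : ∀ l' : Fin (k+1),
        ((pb (l'.1 = l.1 + 1)) && (pb (l'.1 + 1 = l.1 + 1))) = false := by
      intro l'
      by_cases h : l'.1 = l.1 + 1
      · rw [(pb_false (by omega) : pb (l'.1 + 1 = l.1 + 1) = false), Bool.and_false]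
      · rw [pb_false h, Bool.false_and]
    have hs1 : ∀ l' : Fin (k+1),
        ((pb (l'.1 = l.1 ∨ l'.1 = l.1+1)) && (pb (l'.1+1 = l.1 ∨ l'.1+1 = l.1+1)))
          = pb (l' = l) := by
      intro l'
      by_cases h : l'.1 = l.1
      · rw [pb_true (Or.inl h), pb_true (Or.inr (by omega)), Bool.true_and,
          pb_true (Fin.ext h)]
      · by_cases h2 : l'.1 = l.1 + 1
        · rw [(pb_false (by omega) : pb (l'.1 + 1 = l.1 ∨ l'.1 + 1 = l.1 + 1) = false),
            Bool.and_false, pb_false (fun hc => h (congrArg Fin.val hc))]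
        · rw [(pb_false (by omega) : pb (l'.1 = l.1 ∨ l'.1 = l.1 + 1) = false),
            Bool.false_and, pb_false (fun hc => h (congrArg Fin.val hc))]
    obtain ⟨l', hl'⟩ := setup l (fun q => pb (q = l.1 + 1)) (fun q => pb (q = l.1 ∨ q = l.1+1))
      hs0 hs1
    have hpos : l'.1 + 1 = l.1 ∨ l'.1 = l.1 := by
      by_contra hc
      push_neg at hc
      apply hl'
      have e1 : pb (l'.1 = l.1 + 1) = pb (l'.1 = l.1 ∨ l'.1 = l.1 + 1) := by
        by_cases hy : l'.1 = l.1 + 1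
        · rw [pb_true hy, pb_true (Or.inr hy)]
        · rw [pb_false hy, pb_false (by omega)]
      have e2 : pb (l'.1 + 1 = l.1 + 1) = pb (l'.1 + 1 = l.1 ∨ l'.1 + 1 = l.1 + 1) := by
        rw [pb_false (by omega), pb_false (by omega)]
      rw [e1, e2]
    rcases hpos with hp | hp
    · refine ⟨l', hp, ?_⟩
      by_contra hGc
      apply hl'
      rw [(pb_false (by omega) : pb (l'.1 = l.1 + 1) = false),
        (pb_false (by omega) : pb (l'.1 + 1 = l.1 + 1) = false),
        (pb_false (by omega) : pb (l'.1 = l.1 ∨ l'.1 = l.1 + 1) = false),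
        (pb_true (Or.inl hp) : pb (l'.1 + 1 = l.1 ∨ l'.1 + 1 = l.1 + 1) = true)]
      have hff : ¬ G l' false false := fun hgff => hGc (hmono l' _ _ _ _ (idt _) (triv _) hgff)
      rw [pb_false hff, pb_false hGc]
    · exfalso
      apply hl'
      have hll : l' = l := Fin.ext hp
      rw [(pb_false (by omega) : pb (l'.1 = l.1 + 1) = false),
        (pb_true (by omega) : pb (l'.1 + 1 = l.1 + 1) = true),
        (pb_true (Or.inl hp) : pb (l'.1 = l.1 ∨ l'.1 = l.1 + 1) = true),
        (pb_true (Or.inr (by omega)) : pb (l'.1 + 1 = l.1 ∨ l'.1 + 1 = l.1 + 1) = true)]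
      rw [hll]
      rw [pb_true hG, pb_true (hmono _ _ _ _ _ (triv _) (idt _) hG)]
  have h2 : ∀ l, ¬ G l false true := by
    intro l
    induction l using Fin.induction with
    | zero =>
      intro hG
      obtain ⟨l', hl', -⟩ := main2 _ hG
      simp only [Fin.val_zero] at hl'
      omega
    | succ i ih =>
      intro hG
      obtain ⟨l', hl', hG'⟩ := main2 _ hG
      have : l' = i.castSucc := by
        apply Fin.ext
        simp only [Fin.val_succ] at hl'
        simp only [Fin.coe_castSucc]
        omega
      subst this
      exact ih hG'
  refine ⟨h1, h2, ?_⟩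
  intro l
  by_contra hG
  have hs0 : ∀ l' : Fin (k+1), ((false : Bool) && false) = false := by
    intro l'; rw [Bool.false_and]
  have hs1 : ∀ l' : Fin (k+1),
      ((pb (l'.1 = l.1 ∨ l'.1 = l.1+1)) && (pb (l'.1+1 = l.1 ∨ l'.1+1 = l.1+1)))
        = pb (l' = l) := by
    intro l'
    by_cases h : l'.1 = l.1
    · rw [pb_true (Or.inl h), pb_true (Or.inr (by omega)), Bool.true_and,
        pb_true (Fin.ext h)]
    · by_cases h2 : l'.1 = l.1 + 1
      · rw [(pb_false (by omega) : pb (l'.1 + 1 = l.1 ∨ l'.1 + 1 = l.1 + 1) = false),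
          Bool.and_false, pb_false (fun hc => h (congrArg Fin.val hc))]
      · rw [(pb_false (by omega) : pb (l'.1 = l.1 ∨ l'.1 = l.1 + 1) = false),
          Bool.false_and, pb_false (fun hc => h (congrArg Fin.val hc))]
  obtain ⟨l', hl'⟩ := setup l (fun _ => false) (fun q => pb (q = l.1 ∨ q = l.1+1))
    (fun l' => hs0 l') hs1
  apply hl'
  by_cases hA : l'.1 = l.1
  · have hll : l' = l := Fin.ext hA
    rw [(pb_true (Or.inl hA) : pb (l'.1 = l.1 ∨ l'.1 = l.1 + 1) = true),
      (pb_true (Or.inr (by omega)) : pb (l'.1 + 1 = l.1 ∨ l'.1 + 1 = l.1 + 1) = true)]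
    rw [hll]
    have hff : ¬ G l false false := fun hgff => hG (hmono l _ _ _ _ (triv _) (triv _) hgff)
    rw [pb_false hff, pb_false hG]
  · by_cases hB : l'.1 = l.1 + 1
    · rw [(pb_true (Or.inr hB) : pb (l'.1 = l.1 ∨ l'.1 = l.1 + 1) = true),
        (pb_false (by omega) : pb (l'.1 + 1 = l.1 ∨ l'.1 + 1 = l.1 + 1) = false)]
      have hff : ¬ G l' false false := fun hgff => h1 l' (hmono l' _ _ _ _ (triv _) (triv _) hgff)
      rw [pb_false hff, pb_false (h1 l')]
    · by_cases hC : l'.1 + 1 = l.1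
      · rw [(pb_false (by omega) : pb (l'.1 = l.1 ∨ l'.1 = l.1 + 1) = false),
          (pb_true (Or.inl hC) : pb (l'.1 + 1 = l.1 ∨ l'.1 + 1 = l.1 + 1) = true)]
        have hff : ¬ G l' false false := fun hgff => h2 l' (hmono l' _ _ _ _ (triv _) (triv _) hgff)
        rw [pb_false hff, pb_false (h2 l')]
      · rw [(pb_false (by omega) : pb (l'.1 = l.1 ∨ l'.1 = l.1 + 1) = false),
          (pb_false (by omega) : pb (l'.1 + 1 = l.1 ∨ l'.1 + 1 = l.1 + 1) = false)]

end Core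
end S17
namespace S17
open Classical
variable {n k : ℕ}

lemma bool_ext {x y : Bool} (h : x = true ↔ y = true) : x = y := by
  cases x <;> cases y <;> simp_all

lemma pb_or {A B : Prop} : pb (A ∨ B) = (pb A || pb B) := by
  by_cases hA : A <;> by_cases hB : B <;> simp [pb, hA, hB]

/-- local two-variable probe at level `l` of pair `P` with bits `x,y`. -/
noncomputable def chp (P : Fin n × Fin n) (l : Fin (k+1)) (x y : Bool) : HVar n k → Bool :=
  fun v => (pb (v = Lv l P) && x) || (pb (v = Rv l P) && y)

lemma chp_L (P : Fin n × Fin n) (l : Fin (k+1)) (x y : Bool) :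
    chp P l x y (Lv l P) = x := by
  unfold chp
  rw [pb_true rfl, Bool.true_and, pb_false (Lv_ne_Rv l P), Bool.false_and, Bool.or_false]

lemma chp_R (P : Fin n × Fin n) (l : Fin (k+1)) (x y : Bool) :
    chp P l x y (Rv l P) = y := by
  unfold chp
  rw [pb_true rfl, Bool.true_and, pb_false (fun h => Lv_ne_Rv l P h.symm), Bool.false_and,
    Bool.false_or]

lemma chp_supp (P : Fin n × Fin n) (l : Fin (k+1)) (x y : Bool) (v : HVar n k) :
    chp P l x y v = true → InChain P v := by
  intro hv
  unfold chp at hv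
  rw [Bool.or_eq_true] at hv
  rcases hv with h | h <;> rw [Bool.and_eq_true] at h
  · exact ⟨l.1, Lv_pos_le l, pb_iff.1 h.1⟩
  · exact ⟨l.1+1, Rv_pos_le l, pb_iff.1 h.1⟩

/-- The unknown local family attached to `θ'` and a pair `P`. -/
def Phi (θ' : HVar n k → Option Bool) (P : Fin n × Fin n) (l : Fin (k+1)) (x y : Bool) : Prop :=
  EVP l θ' (chp P l x y)

lemma phi_mono (θ' : HVar n k → Option Bool) (P : Fin n × Fin n) (l : Fin (k+1))
    (x x' y y' : Bool) (hx : x = true → x' = true) (hy : y = true → y' = true) :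
    Phi θ' P l x y → Phi θ' P l x' y' := by
  apply EVP_mono
  intro v hv
  unfold chp at hv ⊢
  rw [Bool.or_eq_true, Bool.and_eq_true, Bool.and_eq_true] at hv ⊢
  rcases hv with h | h
  · exact Or.inl ⟨h.1, hx h.2⟩
  · exact Or.inr ⟨h.1, hy h.2⟩

lemma trchar_of_phi {θ' : HVar n k → Option Bool} {P : Fin n × Fin n}
    (h1 : ∀ l, ¬ Phi θ' P l true false) (h2 : ∀ l, ¬ Phi θ' P l false true)
    (h3 : ∀ l, Phi θ' P l true true) : TrChar θ' P := by
  intro l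
  refine ⟨?_, ?_, ?_⟩
  · refine EVP_mono ?_ (h3 l)
    intro v hv
    unfold chp at hv
    rw [Bool.or_eq_true] at hv
    rcases hv with h | h <;> rw [Bool.and_eq_true] at h
    · exact pb_true (Or.inl (pb_iff.1 h.1))
    · exact pb_true (Or.inr (pb_iff.1 h.1))
  · intro hEV
    apply h1 l
    refine EVP_mono ?_ hEV
    intro v hv
    have hvL : v = Lv l P := pb_iff.1 hv
    rw [hvL, chp_L]
  · intro hEV
    apply h2 l
    refine EVP_mono ?_ hEV
    intro v hv
    have hvR : v = Rv l P := pb_iff.1 hv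
    rw [hvR, chp_R]

lemma fin3_cover : ∀ t t' : Fin 3, t' = t ∨ t' = t.succAbove 0 ∨ t' = t.succAbove 1 := by
  decide

lemma fin3_sa_ne : ∀ (t : Fin 3) (s : Fin 2), t.succAbove s ≠ t := by decide

lemma fin3_sa_ne' : ∀ t : Fin 3, t.succAbove 0 ≠ t.succAbove 1 := by decide

/-- Rigidity: each of the three independent transversal chains of `θ`
is a transversal chain of `θ'`. -/
lemma RIG (hk : 1 ≤ k) (f : (Fin (k+1) → Bool) → Bool) (hdep : ∀ l, BFDependsOn f l)
    (θ θ' : HVar n k → Option Bool)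
    (heqf : ∀ a, f (fun l => evB l θ' a) = f (fun l => evB l θ a))
    (u : Fin 3 → Fin n × Fin n)
    (hindI : ∀ t t', (u t).1 = (u t').1 → t = t')
    (hindJ : ∀ t t', (u t).2 = (u t').2 → t = t')
    (hu : ∀ t, TrChar θ (u t)) :
    ∀ t, TrChar θ' (u t) := by
  have hF : ∀ t', Facts θ (u t') := fun t' => facts_of_char (hu t')
  intro t
  have hID : ∀ B : Fin (k+1) → Bool, ∃ W : Fin (k+1) → Bool, ∀ d : ℕ → Bool,
      f (fun l => (d l.1 && d (l.1+1)) || B l)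
        = f (fun l => pb (Phi θ' (u t) l (d l.1) (d (l.1+1))) || W l) := by
    intro B
    set Bn : ℕ → Bool := fun q => if h : q < k+1 then B ⟨q, h⟩ else false with hBndef
    have hBnb : ∀ q, Bn q = true → q ≤ k := by
      intro q hq
      by_cases h : q < k+1
      · omega
      · rw [hBndef] at hq
        dsimp only at hq
        rw [dif_neg h] at hq
        exact Bool.noConfusion hq
    have hBneq : ∀ l : Fin (k+1), Bn l.1 = B l := by
      intro l
      rw [hBndef]
      dsimp only
      rw [dif_pos l.isLt]
    obtain ⟨c2, hc2b, hc2iff⟩ := parity_real k Bn hBnb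
    refine ⟨fun l => pb (∃ s : Fin 2,
      Phi θ' (u (t.succAbove s)) l (c2 s l.1) (c2 s (l.1+1))), ?_⟩
    intro d
    set cc : Fin 3 → ℕ → Bool := fun t' q =>
      if t' = t then d q else if t' = t.succAbove 0 then c2 0 q else c2 1 q with hccdef
    have ccT : ∀ q, cc t q = d q := by
      intro q; rw [hccdef]; dsimp only; rw [if_pos rfl]
    have ccS : ∀ (s : Fin 2) q, cc (t.succAbove s) q = c2 s q := by
      intro s q
      rw [hccdef]; dsimp only
      rw [if_neg (fin3_sa_ne t s)]
      by_cases hs : s = 0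
      · subst hs; rw [if_pos rfl]
      · have hs1 : s = 1 := by omega
        subst hs1
        rw [if_neg (fun h => fin3_sa_ne' t h.symm)]
    set cp : HVar n k → Bool := fun v =>
      pb (∃ t' q, q ≤ k+1 ∧ v = cvar n k q (u t').1 (u t').2 ∧ cc t' q = true) with hcpdef
    have cpval : ∀ t' q, q ≤ k+1 → cp (cvar n k q (u t').1 (u t').2) = cc t' q := by
      intro t' q hq
      rw [hcpdef]; dsimp only
      cases hv : cc t' q with
      | true => exact pb_true ⟨t', q, hq, rfl, hv⟩
      | false =>
        apply pb_false
        rintro ⟨t'', q'', hq'', he, hcc⟩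
        have e := cvar_eq_elim hq hq'' he
        have hqq : q = q'' := e.1
        subst hqq
        have htt : t' = t'' := by
          by_cases h0 : q = 0
          · exact hindI t' t'' (e.2.1 h0)
          · by_cases hkk : q ≤ k
            · exact hindI t' t'' (e.2.2.2 (by omega) hkk).1
            · exact hindJ t' t'' (e.2.2.1 (by omega))
        subst htt
        rw [hv] at hcc
        exact Bool.noConfusion hcc
    have cpsupp : ∀ v, cp v = true → ∃ t', InChain (u t') v := by
      intro v hv
      rw [hcpdef] at hv
      dsimp only at hv
      obtain ⟨t', q, hq, he, -⟩ := pb_iff.1 hv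
      exact ⟨t', q, hq, he⟩
    have subsupp : ∀ t' v, (cp v && pb (InChain (u t') v)) = true → InChain (u t') v := by
      intro t' v hv
      rw [Bool.and_eq_true] at hv
      exact pb_iff.1 hv.2
    have subL : ∀ t' (l : Fin (k+1)),
        (cp (Lv l (u t')) && pb (InChain (u t') (Lv l (u t')))) = cc t' l.1 := by
      intro t' l
      have h1 : Lv l (u t') = cvar n k l.1 (u t').1 (u t').2 := rfl
      rw [h1, cpval t' l.1 (Lv_pos_le l), pb_true ⟨l.1, Lv_pos_le l, rfl⟩, Bool.and_true]
    have subR : ∀ t' (l : Fin (k+1)),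
        (cp (Rv l (u t')) && pb (InChain (u t') (Rv l (u t')))) = cc t' (l.1+1) := by
      intro t' l
      have h1 : Rv l (u t') = cvar n k (l.1+1) (u t').1 (u t').2 := rfl
      rw [h1, cpval t' (l.1+1) (Rv_pos_le l), pb_true ⟨l.1+1, Rv_pos_le l, rfl⟩, Bool.and_true]
    have hLHS : ∀ l : Fin (k+1), evB l θ cp = ((d l.1 && d (l.1+1)) || B l) := by
      intro l
      apply bool_ext
      rw [evB_iff]
      constructor
      · intro hEV
        rw [EV3 hk u hindI hindJ cpsupp l] at hEV
        obtain ⟨t', hEV⟩ := hEV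
        rw [SEV hk (hF t') (subsupp t') l] at hEV
        rw [subL t' l, subR t' l] at hEV
        rw [Bool.or_eq_true, Bool.and_eq_true]
        rcases fin3_cover t t' with he | he | he
        · subst he
          rw [ccT, ccT] at hEV
          exact Or.inl hEV
        · subst he
          rw [ccS 0, ccS 0] at hEV
          right
          rw [← hBneq l]
          exact (hc2iff l.1).1 ⟨0, hEV.1, hEV.2⟩
        · subst he
          rw [ccS 1, ccS 1] at hEV
          right
          rw [← hBneq l]
          exact (hc2iff l.1).1 ⟨1, hEV.1, hEV.2⟩
      · intro hOr
        rw [Bool.or_eq_true, Bool.and_eq_true] at hOr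
        rw [EV3 hk u hindI hindJ cpsupp l]
        rcases hOr with ⟨hd1, hd2⟩ | hB
        · refine ⟨t, ?_⟩
          rw [SEV hk (hF t) (subsupp t) l]
          rw [subL t l, subR t l, ccT, ccT]
          exact ⟨hd1, hd2⟩
        · rw [← hBneq l] at hB
          obtain ⟨s, hs1, hs2⟩ := (hc2iff l.1).2 hB
          refine ⟨t.succAbove s, ?_⟩
          rw [SEV hk (hF _) (subsupp _) l]
          rw [subL _ l, subR _ l, ccS s, ccS s]
          exact ⟨hs1, hs2⟩
    have hloc : ∀ t' (l : Fin (k+1)),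
        EVP l θ' (fun v => cp v && pb (InChain (u t') v))
          ↔ Phi θ' (u t') l (cc t' l.1) (cc t' (l.1+1)) := by
      intro t' l
      unfold Phi
      refine LOC (subsupp t') (chp_supp (u t') l _ _) l ?_ ?_
      · rw [chp_L]
        exact subL t' l
      · rw [chp_R]
        exact subR t' l
    have hRHS : ∀ l : Fin (k+1), evB l θ' cp
        = (pb (Phi θ' (u t) l (d l.1) (d (l.1+1)))
          || pb (∃ s : Fin 2, Phi θ' (u (t.succAbove s)) l (c2 s l.1) (c2 s (l.1+1)))) := by
      intro l
      apply bool_ext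
      rw [evB_iff]
      rw [EV3 hk u hindI hindJ cpsupp l]
      rw [Bool.or_eq_true, pb_iff, pb_iff]
      constructor
      · rintro ⟨t', hEV⟩
        rw [hloc t' l] at hEV
        rcases fin3_cover t t' with he | he | he
        · subst he
          rw [ccT, ccT] at hEV
          exact Or.inl hEV
        · subst he
          rw [ccS 0, ccS 0] at hEV
          exact Or.inr ⟨0, hEV⟩
        · subst he
          rw [ccS 1, ccS 1] at hEV
          exact Or.inr ⟨1, hEV⟩
      · rintro (h | ⟨s, h⟩)
        · refine ⟨t, ?_⟩
          rw [hloc t l, ccT, ccT]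
          exact h
        · refine ⟨t.succAbove s, ?_⟩
          rw [hloc _ l, ccS s, ccS s]
          exact h
    have h := heqf cp
    rw [show (fun l => evB l θ' cp) = (fun l =>
        (pb (Phi θ' (u t) l (d l.1) (d (l.1+1)))
          || pb (∃ s : Fin 2, Phi θ' (u (t.succAbove s)) l (c2 s l.1) (c2 s (l.1+1)))))
      from funext hRHS] at h
    rw [show (fun l => evB l θ cp) = (fun l => (d l.1 && d (l.1+1)) || B l)
      from funext hLHS] at h
    exact h.symm
  obtain ⟨e1, e2, e3⟩ := core_elim f hdep (fun l x y => Phi θ' (u t) l x y)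
    (fun l x x' y y' hx hy => phi_mono θ' (u t) l x x' y y' hx hy) hID
  exact trchar_of_phi e1 e2 e3

end S17
namespace S17
open Classical
variable {n k : ℕ}

lemma assign3 {α : Type*} (u : Fin 3 → α) (PA PB : α → Prop)
    (hA1 : ∀ t t', PA (u t) → PA (u t') → t = t')
    (hB1 : ∀ t t', PB (u t) → PB (u t') → t = t')
    (hAB : ∀ t, PA (u t) → PB (u t) → False) :
    ∃ ρ : Fin 3 → Fin 3, (∀ r, ∃ t, ρ t = r) ∧
      (∀ t, PA (u t) → ρ t = 0) ∧ (∀ t, PB (u t) → ρ t = 1) := by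
  by_cases hA : ∃ t, PA (u t)
  · obtain ⟨tA, htA⟩ := hA
    by_cases hB : ∃ t, PB (u t)
    · obtain ⟨tB, htB⟩ := hB
      have hne : tA ≠ tB := fun h => hAB tA htA (by rw [h]; exact htB)
      refine ⟨fun t => if t = tA then 0 else if t = tB then 1 else 2, ?_, ?_, ?_⟩
      · intro r
        by_cases hr0 : r = 0
        · exact ⟨tA, by dsimp only; rw [if_pos rfl]; exact hr0.symm⟩
        · by_cases hr1 : r = 1
          · exact ⟨tB, by dsimp only; rw [if_neg (Ne.symm hne), if_pos rfl]; exact hr1.symm⟩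
          · have hr2 : r = 2 := by omega
            by_cases hc : tA.succAbove 0 = tB
            · refine ⟨tA.succAbove 1, ?_⟩
              dsimp only
              rw [if_neg (fin3_sa_ne tA 1),
                if_neg (fun h => fin3_sa_ne' tA (hc.trans h.symm))]
              exact hr2.symm
            · refine ⟨tA.succAbove 0, ?_⟩
              dsimp only
              rw [if_neg (fin3_sa_ne tA 0), if_neg hc]
              exact hr2.symm
      · intro t ht
        dsimp only
        rw [if_pos (hA1 t tA ht htA)]
      · intro t ht
        have htt : t = tB := hB1 t tB ht htB
        subst htt
        dsimp only
        rw [if_neg (Ne.symm hne), if_pos rfl]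
    · push_neg at hB
      refine ⟨fun t => if t = tA then 0 else if t = tA.succAbove 0 then 1 else 2, ?_, ?_, ?_⟩
      · intro r
        by_cases hr0 : r = 0
        · exact ⟨tA, by dsimp only; rw [if_pos rfl]; exact hr0.symm⟩
        · by_cases hr1 : r = 1
          · exact ⟨tA.succAbove 0, by
              dsimp only
              rw [if_neg (fin3_sa_ne tA 0), if_pos rfl]; exact hr1.symm⟩
          · have hr2 : r = 2 := by omega
            refine ⟨tA.succAbove 1, ?_⟩
            dsimp only
            rw [if_neg (fin3_sa_ne tA 1), if_neg (fun h => fin3_sa_ne' tA h.symm)]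
            exact hr2.symm
      · intro t ht
        dsimp only
        rw [if_pos (hA1 t tA ht htA)]
      · intro t ht
        exact absurd ht (hB t)
  · push_neg at hA
    by_cases hB : ∃ t, PB (u t)
    · obtain ⟨tB, htB⟩ := hB
      refine ⟨fun t => if t = tB then 1 else if t = tB.succAbove 0 then 0 else 2, ?_, ?_, ?_⟩
      · intro r
        by_cases hr1 : r = 1
        · exact ⟨tB, by dsimp only; rw [if_pos rfl]; exact hr1.symm⟩
        · by_cases hr0 : r = 0
          · exact ⟨tB.succAbove 0, by
              dsimp only
              rw [if_neg (fin3_sa_ne tB 0), if_pos rfl]; exact hr0.symm⟩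
          · have hr2 : r = 2 := by omega
            refine ⟨tB.succAbove 1, ?_⟩
            dsimp only
            rw [if_neg (fin3_sa_ne tB 1), if_neg (fun h => fin3_sa_ne' tB h.symm)]
            exact hr2.symm
      · intro t ht
        exact absurd ht (hA t)
      · intro t ht
        dsimp only
        rw [if_pos (hB1 t tB ht htB)]
    · push_neg at hB
      exact ⟨id, fun r => ⟨r, rfl⟩, fun t ht => absurd ht (hA t), fun t ht => absurd ht (hB t)⟩

/-- One direction: a transversal of `θ` is a transversal of `θ'`. -/
lemma ONEDIR (hk : 1 ≤ k) (f : (Fin (k+1) → Bool) → Bool) (hdep : ∀ l, BFDependsOn f l)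
    (θ θ' : HVar n k → Option Bool)
    (heqf : ∀ a, f (fun l => evB l θ' a) = f (fun l => evB l θ a))
    (u : Fin 3 → Fin n × Fin n)
    (hindI : ∀ t t', (u t).1 = (u t').1 → t = t')
    (hindJ : ∀ t t', (u t).2 = (u t').2 → t = t')
    (hu : ∀ t, TrChar θ (u t)) (hu' : ∀ t, TrChar θ' (u t))
    (p : Fin n × Fin n) (hp : TrChar θ p) : TrChar θ' p := by
  by_cases hpc : ∃ t, u t = p
  · obtain ⟨t, ht⟩ := hpc
    rw [← ht]
    exact hu' t
  · push_neg at hpc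
    have hF : ∀ t, Facts θ (u t) := fun t => facts_of_char (hu t)
    have hF' : ∀ t, Facts θ' (u t) := fun t => facts_of_char (hu' t)
    have hFp : Facts θ p := facts_of_char hp
    have hID : ∀ B : Fin (k+1) → Bool, ∃ W : Fin (k+1) → Bool, ∀ d : ℕ → Bool,
        f (fun l => (d l.1 && d (l.1+1)) || B l)
          = f (fun l => pb (Phi θ' p l (d l.1) (d (l.1+1))) || W l) := by
      intro B
      set Bn : ℕ → Bool := fun q => if h : q < k+1 then B ⟨q, h⟩ else false with hBndef
      have hBnb : ∀ q, Bn q = true → q ≤ k := by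
        intro q hq
        by_cases h : q < k+1
        · omega
        · rw [hBndef] at hq
          dsimp only at hq
          rw [dif_neg h] at hq
          exact Bool.noConfusion hq
      have hBneq : ∀ l : Fin (k+1), Bn l.1 = B l := by
        intro l
        rw [hBndef]
        dsimp only
        rw [dif_pos l.isLt]
      obtain ⟨R, hR0, hR1, hR2, hRiff⟩ := real3 hk Bn hBnb
      obtain ⟨ρ, hsurj, hρA, hρB⟩ := assign3 u (fun x => x.1 = p.1) (fun x => x.2 = p.2)
        (fun t t' h h' => hindI t t' (h.trans h'.symm))
        (fun t t' h h' => hindJ t t' (h.trans h'.symm))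
        (fun t h h' => hpc t (Prod.ext h h'))
      set cc : Fin 3 → ℕ → Bool := fun t q => R (ρ t) q with hccdef
      have ban1 : ∀ t, (u t).1 = p.1 → ∀ q, q ≤ 1 → cc t q = false := by
        intro t ht q hq
        rw [hccdef]; dsimp only
        rw [hρA t ht]
        cases hv : R 0 q with
        | false => rfl
        | true => exact absurd (hR0 q hv).1 (by omega)
      have bank : ∀ t, (u t).2 = p.2 → ∀ q, k ≤ q → cc t q = false := by
        intro t ht q hq
        rw [hccdef]; dsimp only
        rw [hρB t ht]
        cases hv : R 1 q with
        | false => rfl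
        | true => exact absurd (hR1 q hv) (by omega)
      refine ⟨B, ?_⟩
      intro d
      set ap : HVar n k → Bool := fun v =>
        pb ((∃ q, q ≤ k+1 ∧ v = cvar n k q p.1 p.2 ∧ d q = true)
          ∨ (∃ t q, q ≤ k+1 ∧ v = cvar n k q (u t).1 (u t).2 ∧ cc t q = true)) with hapdef
      have apP : ∀ q, q ≤ k+1 → ap (cvar n k q p.1 p.2) = d q := by
        intro q hq
        rw [hapdef]; dsimp only
        cases hv : d q with
        | true => exact pb_true (Or.inl ⟨q, hq, rfl, hv⟩)
        | false =>
          apply pb_false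
          rintro (⟨q', hq', he, hd⟩ | ⟨t, q', hq', he, hc⟩)
          · have e := cvar_eq_elim hq hq' he
            rw [← e.1] at hd
            rw [hv] at hd
            exact Bool.noConfusion hd
          · have e := cvar_eq_elim hq hq' he
            have hqq : q = q' := e.1
            subst hqq
            by_cases h0 : q = 0
            · have hsh : (u t).1 = p.1 := (e.2.1 h0).symm
              have := ban1 t hsh q (by omega)
              rw [this] at hc
              exact Bool.noConfusion hc
            · by_cases hkk : q ≤ k
              · have hpr := e.2.2.2 (by omega) hkk
                exact hpc t (Prod.ext hpr.1.symm hpr.2.symm)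
              · have hsh : (u t).2 = p.2 := (e.2.2.1 (by omega)).symm
                have := bank t hsh q (by omega)
                rw [this] at hc
                exact Bool.noConfusion hc
      have apUns : ∀ t q, q ≤ k+1 → ((u t).1 = p.1 → q ≠ 0) → ((u t).2 = p.2 → q ≠ k+1) →
          ap (cvar n k q (u t).1 (u t).2) = cc t q := by
        intro t q hq hg1 hg2
        rw [hapdef]; dsimp only
        cases hv : cc t q with
        | true => exact pb_true (Or.inr ⟨t, q, hq, rfl, hv⟩)
        | false =>
          apply pb_false
          rintro (⟨q', hq', he, hd⟩ | ⟨t'', q'', hq'', he, hc⟩)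
          · have e := cvar_eq_elim hq hq' he
            have hqq : q = q' := e.1
            by_cases h0 : q = 0
            · exact hg1 (e.2.1 h0) h0
            · by_cases hkk : q ≤ k
              · have hpr := e.2.2.2 (by omega) hkk
                exact hpc t (Prod.ext hpr.1 hpr.2)
              · exact hg2 (e.2.2.1 (by omega)) (by omega)
          · have e := cvar_eq_elim hq hq'' he
            have hqq : q = q'' := e.1
            subst hqq
            have htt : t = t'' := by
              by_cases h0 : q = 0
              · exact hindI t t'' (e.2.1 h0)
              · by_cases hkk : q ≤ k
                · exact hindI t t'' (e.2.2.2 (by omega) hkk).1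
                · exact hindJ t t'' (e.2.2.1 (by omega))
            subst htt
            rw [hv] at hc
            exact Bool.noConfusion hc
      have apsupp : ∀ v, ap v = true → InChain p v ∨ ∃ t, InChain (u t) v := by
        intro v hv
        rw [hapdef] at hv
        dsimp only at hv
        rcases pb_iff.1 hv with ⟨q, hq, he, -⟩ | ⟨t, q, hq, he, -⟩
        · exact Or.inl ⟨q, hq, he⟩
        · exact Or.inr ⟨t, q, hq, he⟩
      have hb1e : ∀ t, (u t).1 = p.1 → ap (cvar n k 1 (u t).1 (u t).2) = false := by
        intro t ht
        rw [apUns t 1 (by omega) (fun _ => by omega) (fun _ => by omega)]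
        exact ban1 t ht 1 (le_refl 1)
      have hbke : ∀ t, (u t).2 = p.2 → ap (cvar n k k (u t).1 (u t).2) = false := by
        intro t ht
        rw [apUns t k (by omega) (fun _ => by omega) (fun _ => by omega)]
        exact bank t ht k (le_refl k)
      have apA : ∀ t (l : Fin (k+1)),
          (ap (Lv l (u t)) = true ∧ ap (Rv l (u t)) = true)
            ↔ (cc t l.1 = true ∧ cc t (l.1+1) = true) := by
        intro t l
        have eL : Lv l (u t) = cvar n k l.1 (u t).1 (u t).2 := rfl
        have eR : Rv l (u t) = cvar n k (l.1+1) (u t).1 (u t).2 := rfl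
        by_cases hsh1 : (u t).1 = p.1
        · by_cases hl0 : l.1 = 0
          · have h2 : ap (Rv l (u t)) = cc t (l.1+1) := by
              rw [eR]
              exact apUns t (l.1+1) (Rv_pos_le l) (fun _ => by omega)
                (fun hsh2 => (hpc t (Prod.ext hsh1 hsh2)).elim)
            have hcc2 : cc t (l.1+1) = false := ban1 t hsh1 (l.1+1) (by omega)
            constructor
            · rintro ⟨-, hb⟩
              rw [h2, hcc2] at hb
              exact absurd hb (by simp)
            · rintro ⟨-, hb⟩
              rw [hcc2] at hb
              exact absurd hb (by simp)
          · have h1 : ap (Lv l (u t)) = cc t l.1 := by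
              rw [eL]
              exact apUns t l.1 (Lv_pos_le l) (fun _ => hl0) (fun _ => by omega)
            have h2 : ap (Rv l (u t)) = cc t (l.1+1) := by
              rw [eR]
              exact apUns t (l.1+1) (Rv_pos_le l) (fun _ => by omega)
                (fun hsh2 => (hpc t (Prod.ext hsh1 hsh2)).elim)
            rw [h1, h2]
        · by_cases hsh2 : (u t).2 = p.2
          · by_cases hlk : l.1 = k
            · have h1 : ap (Lv l (u t)) = cc t l.1 := by
                rw [eL]
                exact apUns t l.1 (Lv_pos_le l) (fun hs => (hsh1 hs).elim) (fun _ => by omega)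
              have hcc1 : cc t l.1 = false := bank t hsh2 l.1 (by omega)
              constructor
              · rintro ⟨ha, -⟩
                rw [h1, hcc1] at ha
                exact absurd ha (by simp)
              · rintro ⟨ha, -⟩
                rw [hcc1] at ha
                exact absurd ha (by simp)
            · have h1 : ap (Lv l (u t)) = cc t l.1 := by
                rw [eL]
                exact apUns t l.1 (Lv_pos_le l) (fun hs => (hsh1 hs).elim) (fun _ => by omega)
              have h2 : ap (Rv l (u t)) = cc t (l.1+1) := by
                rw [eR]
                exact apUns t (l.1+1) (Rv_pos_le l) (fun _ => by omega) (fun _ => by omega)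
              rw [h1, h2]
          · have h1 : ap (Lv l (u t)) = cc t l.1 := by
              rw [eL]
              exact apUns t l.1 (Lv_pos_le l) (fun hs => (hsh1 hs).elim) (fun _ => by omega)
            have h2 : ap (Rv l (u t)) = cc t (l.1+1) := by
              rw [eR]
              exact apUns t (l.1+1) (Rv_pos_le l) (fun _ => by omega)
                (fun hs => (hsh2 hs).elim)
            rw [h1, h2]
      have hpsi : ∀ (θ₀ : HVar n k → Option Bool) (l : Fin (k+1)),
          EVP l θ₀ (fun v => ap v && pb (InChain p v))
            ↔ Phi θ₀ p l (d l.1) (d (l.1+1)) := by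
        intro θ₀ l
        unfold Phi
        refine LOC (fun v hv => by rw [Bool.and_eq_true] at hv; exact pb_iff.1 hv.2)
          (chp_supp p l _ _) l ?_ ?_
        · rw [chp_L]
          have e1 : Lv l p = cvar n k l.1 p.1 p.2 := rfl
          rw [e1, apP l.1 (Lv_pos_le l), pb_true ⟨l.1, Lv_pos_le l, rfl⟩, Bool.and_true]
        · rw [chp_R]
          have e1 : Rv l p = cvar n k (l.1+1) p.1 p.2 := rfl
          rw [e1, apP (l.1+1) (Rv_pos_le l), pb_true ⟨l.1+1, Rv_pos_le l, rfl⟩, Bool.and_true]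
      have hA' : ∀ l : Fin (k+1),
          (∃ t, ap (Lv l (u t)) = true ∧ ap (Rv l (u t)) = true) ↔ B l = true := by
        intro l
        constructor
        · rintro ⟨t, h⟩
          have hcc := (apA t l).1 h
          rw [← hBneq l]
          exact (hRiff l.1).1 ⟨ρ t, hcc.1, hcc.2⟩
        · intro hB
          rw [← hBneq l] at hB
          obtain ⟨r, hr1, hr2⟩ := (hRiff l.1).2 hB
          obtain ⟨t, ht⟩ := hsurj r
          refine ⟨t, (apA t l).2 ⟨?_, ?_⟩⟩
          · rw [hccdef]; dsimp only; rw [ht]; exact hr1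
          · rw [hccdef]; dsimp only; rw [ht]; exact hr2
      have hLHS : ∀ l : Fin (k+1), evB l θ ap = ((d l.1 && d (l.1+1)) || B l) := by
        intro l
        apply bool_ext
        rw [evB_iff, EV4 hk u p hindI hindJ hpc hF apsupp hb1e hbke l]
        rw [Bool.or_eq_true, Bool.and_eq_true]
        constructor
        · rintro (hL | hR)
          · left
            rw [hpsi θ l] at hL
            unfold Phi at hL
            rw [SEV hk hFp (chp_supp p l _ _) l, chp_L, chp_R] at hL
            exact hL
          · right
            exact (hA' l).1 hR
        · rintro (⟨h1, h2⟩ | hB)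
          · left
            rw [hpsi θ l]
            unfold Phi
            rw [SEV hk hFp (chp_supp p l _ _) l, chp_L, chp_R]
            exact ⟨h1, h2⟩
          · right
            exact (hA' l).2 hB
      have hRHS : ∀ l : Fin (k+1), evB l θ' ap
          = (pb (Phi θ' p l (d l.1) (d (l.1+1))) || B l) := by
        intro l
        apply bool_ext
        rw [evB_iff, EV4 hk u p hindI hindJ hpc hF' apsupp hb1e hbke l]
        rw [Bool.or_eq_true, pb_iff]
        constructor
        · rintro (hL | hR)
          · exact Or.inl ((hpsi θ' l).1 hL)
          · exact Or.inr ((hA' l).1 hR)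
        · rintro (h | hB)
          · exact Or.inl ((hpsi θ' l).2 h)
          · exact Or.inr ((hA' l).2 hB)
      have h := heqf ap
      rw [show (fun l => evB l θ' ap)
          = (fun l => pb (Phi θ' p l (d l.1) (d (l.1+1))) || B l) from funext hRHS,
        show (fun l => evB l θ ap) = (fun l => (d l.1 && d (l.1+1)) || B l)
          from funext hLHS] at h
      exact h.symm
    obtain ⟨e1, e2, e3⟩ := core_elim f hdep (fun l x y => Phi θ' p l x y)
      (fun l x x' y y' hx hy => phi_mono θ' p l x x' y y' hx hy) hID
    exact trchar_of_phi e1 e2 e3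

end S17
namespace S17
open Classical
variable {n k : ℕ}

lemma final_statement (n k : ℕ) (hn : 1 ≤ n) (hk : 1 ≤ k)
    (f : (Fin (k+1) → Bool) → Bool) (hf : ∀ l, BFDependsOn f l)
    (θ : HVar n k → Option Bool) (hθ : HasIndepTransversals n k θ 3)
    (θ' : HVar n k → Option Bool)
    (heq : BF.restrict (Psi n k f) θ' = BF.restrict (Psi n k f) θ) :
    ∀ p : Fin n × Fin n, Transversal n k θ' p ↔ Transversal n k θ p := by
  classical
  obtain ⟨S, hcard, htrans, hpair⟩ := hθ
  obtain ⟨a, ha⟩ := Finset.card_pos.mp (show 0 < S.card by omega)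
  obtain ⟨b, hb⟩ := Finset.card_pos.mp
    (show 0 < (S.erase a).card by rw [Finset.card_erase_of_mem ha]; omega)
  obtain ⟨c, hc⟩ := Finset.card_pos.mp
    (show 0 < ((S.erase a).erase b).card by
      rw [Finset.card_erase_of_mem hb, Finset.card_erase_of_mem ha]; omega)
  have hbS : b ∈ S := Finset.mem_of_mem_erase hb
  have hba : b ≠ a := Finset.ne_of_mem_erase hb
  have hcS : c ∈ S := Finset.mem_of_mem_erase (Finset.mem_of_mem_erase hc)
  have hcb : c ≠ b := Finset.ne_of_mem_erase hc
  have hca : c ≠ a := Finset.ne_of_mem_erase (Finset.mem_of_mem_erase hc)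
  set u : Fin 3 → Fin n × Fin n := fun t => if t = 0 then a else if t = 1 then b else c
    with hudef
  have humem : ∀ t, u t ∈ S := by
    intro t
    rw [hudef]; dsimp only
    split_ifs <;> assumption
  have hIndep : ∀ t t', t ≠ t' → IndepPairs (u t) (u t') := by
    intro t t' hne
    rw [hudef]; dsimp only
    have hip : ∀ x y, x ∈ S → y ∈ S → x ≠ y → IndepPairs x y := by
      intro x y hx hy hxy
      exact hpair (Finset.mem_coe.mpr hx) (Finset.mem_coe.mpr hy) hxy
    by_cases h0 : t = 0 <;> by_cases h0' : t' = 0 <;>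
      by_cases h1 : t = 1 <;> by_cases h1' : t' = 1 <;>
      simp only [h0, h0', h1, h1', if_pos, if_neg, if_true, if_false] <;>
      first
      | (exfalso; omega)
      | (exfalso; exact hne (by omega))
      | exact hip a b ha hbS (Ne.symm hba)
      | exact hip b a hbS ha hba
      | exact hip a c ha hcS (Ne.symm hca)
      | exact hip c a hcS ha hca
      | exact hip b c hbS hcS (Ne.symm hcb)
      | exact hip c b hcS hbS hcb
  have hindI : ∀ t t', (u t).1 = (u t').1 → t = t' := by
    intro t t' h
    by_contra hne
    exact (hIndep t t' hne).1 h
  have hindJ : ∀ t t', (u t).2 = (u t').2 → t = t' := by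
    intro t t' h
    by_contra hne
    exact (hIndep t t' hne).2 h
  have hu3 : ∀ t, TrChar θ (u t) := fun t => (trans_iff θ (u t)).1 (htrans _ (humem t))
  have heqf : ∀ x : HVar n k → Bool,
      f (fun l => evB l θ' x) = f (fun l => evB l θ x) := fun x => congrFun heq x
  have hu3' : ∀ t, TrChar θ' (u t) := RIG hk f hf θ θ' heqf u hindI hindJ hu3
  have heqf' : ∀ x : HVar n k → Bool,
      f (fun l => evB l θ x) = f (fun l => evB l θ' x) := fun x => (heqf x).symm
  intro p
  constructor
  · intro hpt'
    exact (trans_iff θ p).2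
      (ONEDIR hk f hf θ' θ heqf' u hindI hindJ hu3' hu3 p ((trans_iff θ' p).1 hpt'))
  · intro hpt
    exact (trans_iff θ' p).2
      (ONEDIR hk f hf θ θ' heqf u hindI hindJ hu3 hu3' p ((trans_iff θ p).1 hpt))

end S17
/-- If `f` depends on all of its `k+1` variables,
`Ψ = f(H_{k0},…,H_{kk})`, and `θ` has at least 3 pairwise independent transversals,
then every `θ'` with `Ψ[θ'] = Ψ[θ]` has exactly the same set of transversals. -/
theorem same_transversals (n k : ℕ) (hn : 1 ≤ n) (hk : 1 ≤ k)
    (f : (Fin (k+1) → Bool) → Bool) (hf : ∀ l, BFDependsOn f l)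
    (θ : HVar n k → Option Bool) (hθ : HasIndepTransversals n k θ 3)
    (θ' : HVar n k → Option Bool)
    (heq : BF.restrict (Psi n k f) θ' = BF.restrict (Psi n k f) θ) :
    ∀ p : Fin n × Fin n, Transversal n k θ' p ↔ Transversal n k θ p :=
  S17.final_statement n k hn hk f hf θ hθ θ' heq
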